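/- arXiv:2106.04432 — 5 statements merged into one kernel-verified Lean document; each statement's English description precedes it below -/
import Mathlib

section
/- For every lattice Λ, the dual polytope of its Voronoi cell satisfies VC(Λ)° = conv{ (2/‖z‖²)·z : z ∈ Λ \ {0} } (the convex hull being taken of this set, which has only finitely many extreme points). -/
open scoped RealInnerProductSpace
open Set Module

section CompactHull

variable {F : Type*} [NormedAddCommGroup F] [NormedSpace ℝ F] [FiniteDimensional ℝ F]

private lemma sum_extend_eq {ι : Type*} [Fintype ι] {n : ℕ} (e : ι ↪ Fin n)
    {M : Type*} [AddCommMonoid M] (G : Fin n → M) (hG : ∀ j, j ∉ Set.range e → G j = 0) :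
    ∑ j, G j = ∑ i, G (e i) := by
  classical
  rw [show (Finset.univ : Finset (Fin n)).sum G = ∑ j ∈ Finset.univ.image e, G j from
    (Finset.sum_subset (Finset.subset_univ _) (fun j _ hj => hG j (by
      simpa [Finset.mem_image] using hj))).symm]
  rw [Finset.sum_image (fun a _ b _ h => e.injective h)]

theorem isCompact_convexHull_of_isCompact {s : Set F} (hs : IsCompact s) :
    IsCompact (convexHull ℝ s) := by
  classical
  rcases s.eq_empty_or_nonempty with rfl | ⟨s₀, hs₀⟩
  · simp
  set n := finrank ℝ F + 1 with hn
  set g : (Fin n → ℝ) × (Fin n → F) → F := fun p => ∑ i, p.1 i • p.2 i with hg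
  have hgc : Continuous g := by
    refine continuous_finset_sum _ fun i _ => ?_
    exact ((continuous_apply i).comp continuous_fst).smul
      ((continuous_apply i).comp continuous_snd)
  have hT : IsCompact (stdSimplex ℝ (Fin n) ×ˢ Set.univ.pi fun _ : Fin n => s) :=
    (isCompact_stdSimplex _ _).prod (isCompact_univ_pi fun _ => hs)
  have heq : convexHull ℝ s = g '' (stdSimplex ℝ (Fin n) ×ˢ Set.univ.pi fun _ : Fin n => s) := by
    apply Subset.antisymm
    · intro x hx
      obtain ⟨ι, hι, z, w, hzs, hai, hwpos, hwsum, hxsum⟩ :=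
        eq_pos_convex_span_of_mem_convexHull hx
      have hcard : Fintype.card ι ≤ Fintype.card (Fin n) := by
        rw [Fintype.card_fin]
        refine hai.card_le_finrank_succ.trans ?_
        exact Nat.add_le_add_right (Submodule.finrank_le _) 1
      obtain ⟨e⟩ := Function.Embedding.nonempty_of_card_le hcard
      refine ⟨(Function.extend e w 0, Function.extend e z fun _ => s₀), ⟨⟨?_, ?_⟩, ?_⟩, ?_⟩
      · intro j
        dsimp only
        by_cases h : ∃ i, e i = j
        · obtain ⟨i, rfl⟩ := h
          rw [e.injective.extend_apply]
          exact (hwpos i).le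
        · rw [Function.extend_apply' _ _ _ h]
          exact le_rfl
      · dsimp only
        have h1 : ∀ j, j ∉ Set.range e → Function.extend e w 0 j = 0 := fun j hj =>
          Function.extend_apply' _ _ _ (by simpa [Set.mem_range] using hj)
        rw [sum_extend_eq e (Function.extend e w 0) h1]
        simpa [e.injective.extend_apply] using hwsum
      · intro j _
        dsimp only
        by_cases h : ∃ i, e i = j
        · obtain ⟨i, rfl⟩ := h
          rw [e.injective.extend_apply]
          exact hzs ⟨i, rfl⟩
        · rw [Function.extend_apply' _ _ _ h]
          exact hs₀
      · show (∑ j, Function.extend e w 0 j • Function.extend e z (fun _ => s₀) j) = x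
        have h2 : ∀ j, j ∉ Set.range e →
            Function.extend e w 0 j • Function.extend e z (fun _ => s₀) j = 0 := fun j hj => by
          rw [Function.extend_apply' _ _ _ (by simpa [Set.mem_range] using hj)]
          simp
        rw [sum_extend_eq e
          (fun j => Function.extend e w 0 j • Function.extend e z (fun _ => s₀) j) h2]
        simp only [e.injective.extend_apply]
        exact hxsum
    · rintro x ⟨⟨w, v⟩, ⟨⟨hw0, hw1⟩, hv⟩, rfl⟩
      exact (convex_convexHull ℝ s).sum_mem (fun i _ => hw0 i) hw1
        (fun i _ => subset_convexHull ℝ s (hv i (Set.mem_univ i)))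
  rw [heq]
  exact hT.image hgc

end CompactHull

theorem lattice_finite_inter {F : Type*} [NormedAddCommGroup F] [InnerProductSpace ℝ F]
    [FiniteDimensional ℝ F] {k : ℕ} {b : Fin k → F} (hb : LinearIndependent ℝ b)
    {K : Set F} (hK : Bornology.IsBounded K) :
    (K ∩ {x | ∃ z : Fin k → ℤ, x = ∑ i, (z i : ℝ) • b i}).Finite := by
  classical
  have hbr := (linearIndepOn_id_range_iff hb.injective).mpr hb
  let B := Module.Basis.extend hbr
  haveI : Fintype (hbr.extend (Set.subset_univ (Set.range b))) :=
    FiniteDimensional.fintypeBasisIndex B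
  have hsub : {x | ∃ z : Fin k → ℤ, x = ∑ i, (z i : ℝ) • b i} ⊆
      ((Submodule.span ℤ (Set.range B) : Submodule ℤ F) : Set F) := by
    rintro x ⟨z, rfl⟩
    refine Submodule.sum_mem _ fun i _ => ?_
    have hbi : b i ∈ Set.range B := by
      rw [Basis.range_extend]
      exact hbr.subset_extend _ ⟨i, rfl⟩
    rw [Int.cast_smul_eq_zsmul]
    exact Submodule.smul_mem _ (z i) (Submodule.subset_span hbi)
  haveI hdt : DiscreteTopology ((Submodule.span ℤ (Set.range B) : Submodule ℤ F) : Set F) :=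
    (inferInstance : DiscreteTopology (Submodule.span ℤ (Set.range B)))
  have hcl : IsClosed ((Submodule.span ℤ (Set.range B) : Submodule ℤ F) : Set F) := by
    haveI : DiscreteTopology (Submodule.span ℤ (Set.range B)).toAddSubgroup :=
      (inferInstance : DiscreteTopology (Submodule.span ℤ (Set.range B)))
    exact AddSubgroup.isClosed_of_discrete
      (H := (Submodule.span ℤ (Set.range B)).toAddSubgroup)
  exact (Metric.finite_isBounded_inter_isClosed (isDiscrete_iff_discreteTopology.mpr hdt) hK hcl).subset
    (Set.inter_subset_inter_right _ hsub)

private lemma norm_le_iff_inner_le {F : Type*} [NormedAddCommGroup F] [InnerProductSpace ℝ F]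
    (x z : F) : ‖x‖ ≤ ‖x - z‖ ↔ ⟪x, z⟫ ≤ ‖z‖ ^ 2 / 2 := by
  constructor
  · intro h
    have h2 := pow_le_pow_left₀ (norm_nonneg x) h 2
    rw [norm_sub_sq_real] at h2
    linarith
  · intro h
    have h2 : ‖x‖ ^ 2 ≤ ‖x - z‖ ^ 2 := by rw [norm_sub_sq_real]; linarith
    exact (pow_le_pow_iff_left₀ (norm_nonneg x) (norm_nonneg _) two_ne_zero).mp h2


/-- A lattice in a real inner product space: the image of `ℤ^k` under an injective
linear map, i.e. the set of integer combinations of linearly independent vectors. -/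
def IsLattice {E : Type*} [NormedAddCommGroup E] [InnerProductSpace ℝ E] (Λ : Set E) : Prop :=
  ∃ (k : ℕ) (b : Fin k → E), LinearIndependent ℝ b ∧
    Λ = {x | ∃ z : Fin k → ℤ, x = ∑ i, (z i : ℝ) • b i}

/-- The Voronoi cell of a lattice `Λ`:
`{x ∈ lin(Λ) : ‖x‖ ≤ ‖x − z‖ for all z ∈ Λ}`. -/
def VorCell {E : Type*} [NormedAddCommGroup E] [InnerProductSpace ℝ E] (Λ : Set E) : Set E :=
  {x | x ∈ Submodule.span ℝ Λ ∧ ∀ z ∈ Λ, ‖x‖ ≤ ‖x - z‖}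

/-- The dual polytope of the Voronoi cell of `Λ`, taken within `lin(Λ)`:
`{y ∈ lin(Λ) : ⟨x,y⟩ ≤ 1 for all x ∈ VC(Λ)}`. -/
def dualVorCell {E : Type*} [NormedAddCommGroup E] [InnerProductSpace ℝ E]
    (Λ : Set E) : Set E :=
  {y | y ∈ Submodule.span ℝ Λ ∧ ∀ x ∈ VorCell Λ, ⟪x, y⟫ ≤ 1}

/-- For every (nontrivial) lattice `Λ`, the dual polytope of the Voronoi cell is
`VC(Λ)° = conv{ (2/‖z‖²)·z : z ∈ Λ \ {0} }`. -/
theorem dual_voronoi_cell_eq (d : ℕ) (Λ : Set (EuclideanSpace ℝ (Fin d)))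
    (hΛ : IsLattice Λ) (hne : Λ ≠ {0}) :
    dualVorCell Λ =
      convexHull ℝ {w : EuclideanSpace ℝ (Fin d) |
        ∃ z ∈ Λ, z ≠ 0 ∧ w = (2 / ‖z‖ ^ 2) • z} := by
  classical
  obtain ⟨k, b, hb, hΛeq⟩ := hΛ
  set S := {w : EuclideanSpace ℝ (Fin d) | ∃ z ∈ Λ, z ≠ 0 ∧ w = (2 / ‖z‖ ^ 2) • z} with hSdef
  have hzero : (0 : EuclideanSpace ℝ (Fin d)) ∈ Λ := by
    rw [hΛeq]; exact ⟨0, by simp⟩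
  have hneg : ∀ z ∈ Λ, -z ∈ Λ := by
    rw [hΛeq]
    rintro z ⟨c, rfl⟩
    exact ⟨-c, by simp [neg_smul, ← Finset.sum_neg_distrib]⟩
  have hfin : ∀ K : Set (EuclideanSpace ℝ (Fin d)), Bornology.IsBounded K → (K ∩ Λ).Finite := by
    intro K hK; rw [hΛeq]; exact lattice_finite_inter hb hK
  obtain ⟨z₀, hz₀Λ, hz₀⟩ : ∃ z ∈ Λ, z ≠ 0 := by
    by_contra h
    push_neg at h
    exact hne (Set.Subset.antisymm (fun z hz => h z hz) (fun z hz => by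
      rw [Set.mem_singleton_iff] at hz; rw [hz]; exact hzero))
  have hVor : ∀ x, x ∈ VorCell Λ ↔
      x ∈ Submodule.span ℝ Λ ∧ ∀ z ∈ Λ, ⟪x, z⟫ ≤ ‖z‖ ^ 2 / 2 := fun x =>
    and_congr_right fun _ => forall₂_congr fun z _ => norm_le_iff_inner_le x z
  have hSnorm : ∀ z : EuclideanSpace ℝ (Fin d), z ≠ 0 → ‖(2 / ‖z‖ ^ 2) • z‖ = 2 / ‖z‖ := by
    intro z hz
    have hzn : ‖z‖ ≠ 0 := norm_ne_zero_iff.mpr hz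
    rw [norm_smul, Real.norm_eq_abs, abs_of_pos (by positivity)]
    field_simp
  refine Set.Subset.antisymm ?_ (convexHull_min ?_ ?_)
  · -- hard direction
    intro y hy
    by_contra hyK
    obtain ⟨ε, hε, hεle⟩ : ∃ ε > 0, ∀ z ∈ Λ, z ≠ 0 → ε ≤ ‖z‖ := by
      have hF : ((Metric.closedBall (0 : EuclideanSpace ℝ (Fin d)) 1 ∩ Λ) \ {0}).Finite :=
        (hfin _ Metric.isBounded_closedBall).subset Set.diff_subset
      rcases Set.eq_empty_or_nonempty
        ((Metric.closedBall (0 : EuclideanSpace ℝ (Fin d)) 1 ∩ Λ) \ {0}) with hFe | hFne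
      · refine ⟨1, one_pos, fun z hzΛ hz0 => ?_⟩
        by_contra hlt
        push_neg at hlt
        have hmem : z ∈ (Metric.closedBall (0 : EuclideanSpace ℝ (Fin d)) 1 ∩ Λ) \ {0} :=
          ⟨⟨Metric.mem_closedBall.mpr (by simpa using hlt.le), hzΛ⟩, by simpa using hz0⟩
        rw [hFe] at hmem
        exact hmem
      · set t := hF.toFinset with ht
        have htne : t.Nonempty := hF.toFinset_nonempty.mpr hFne
        set m := t.inf' htne (fun z => ‖z‖) with hm
        have hm0 : 0 < m := by
          rw [hm, Finset.lt_inf'_iff]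
          intro z hzt
          have hz0 : z ≠ 0 := by
            have := hF.mem_toFinset.mp hzt
            exact fun h => this.2 (by simp [h])
          exact norm_pos_iff.mpr hz0
        refine ⟨min m 1, lt_min hm0 one_pos, fun z hzΛ hz0 => ?_⟩
        by_cases h1 : ‖z‖ ≤ 1
        · have hzt : z ∈ t := hF.mem_toFinset.mpr
            ⟨⟨Metric.mem_closedBall.mpr (by simpa using h1), hzΛ⟩, by simpa using hz0⟩
          exact le_trans (min_le_left _ _) (Finset.inf'_le _ hzt)
        · exact le_trans (min_le_right _ _) (le_of_not_ge h1)
    have hSb : S ∪ {0} ⊆ Metric.closedBall 0 (2 / ε) := by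
      rintro w (⟨z, hzΛ, hz0, rfl⟩ | rfl)
      · rw [Metric.mem_closedBall, dist_zero_right, hSnorm z hz0]
        gcongr
        exact hεle z hzΛ hz0
      · simp only [Metric.mem_closedBall, dist_self]
        positivity
    have hSc : IsClosed (S ∪ {0} : Set (EuclideanSpace ℝ (Fin d))) := by
      apply IsSeqClosed.isClosed
      intro q w hq hw
      by_cases hw0 : w = 0
      · right; simp [hw0]
      · have hwn : 0 < ‖w‖ := norm_pos_iff.mpr hw0
        set C := (fun z : EuclideanSpace ℝ (Fin d) => (2 / ‖z‖ ^ 2) • z) ''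
          ((Metric.closedBall 0 (4 / ‖w‖) ∩ Λ) \ {0}) with hC
        have hCfin : C.Finite :=
          ((hfin _ Metric.isBounded_closedBall).subset Set.diff_subset).image _
        have hball : ∀ᶠ n in Filter.atTop, q n ∈ Metric.ball w (‖w‖ / 2) :=
          hw (Metric.ball_mem_nhds w (by positivity))
        have hev : ∀ᶠ n in Filter.atTop, q n ∈ C := by
          filter_upwards [hball] with n hn
          have hun : q n ∈ S := by
            rcases hq n with h | h
            · exact h
            · exfalso
              rw [Set.mem_singleton_iff] at h
              rw [h] at hn
              rw [Metric.mem_ball, dist_zero_left] at hn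
              linarith
          obtain ⟨z, hzΛ, hz0, hzw⟩ := hun
          have hzn : 0 < ‖z‖ := norm_pos_iff.mpr hz0
          have hun2 : ‖w‖ / 2 ≤ ‖q n‖ := by
            have hd : ‖q n - w‖ < ‖w‖ / 2 := by
              have := Metric.mem_ball.mp hn
              rwa [dist_eq_norm] at this
            have h3 : ‖w‖ - ‖q n‖ ≤ ‖w - q n‖ := norm_sub_norm_le w (q n)
            rw [norm_sub_rev] at h3
            linarith
          have hnormun : ‖q n‖ = 2 / ‖z‖ := by rw [hzw, hSnorm z hz0]
          have hzb : ‖z‖ ≤ 4 / ‖w‖ := by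
            rw [hnormun] at hun2
            rw [div_le_div_iff₀ (by positivity) hzn] at hun2
            rw [le_div_iff₀ hwn]
            nlinarith
          exact ⟨z, ⟨⟨Metric.mem_closedBall.mpr (by simpa using hzb), hzΛ⟩,
            by simpa using hz0⟩, hzw.symm⟩
        have hwC : w ∈ C := hCfin.isClosed.mem_of_tendsto hw hev
        left
        obtain ⟨z, ⟨⟨_, hzΛ⟩, hz0⟩, rfl⟩ := hwC
        exact ⟨z, hzΛ, by simpa using hz0, rfl⟩
    have hScomp : IsCompact (S ∪ {0} : Set (EuclideanSpace ℝ (Fin d))) :=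
      (isCompact_closedBall (0 : EuclideanSpace ℝ (Fin d)) (2 / ε)).of_isClosed_subset hSc hSb
    have h0K : (0 : EuclideanSpace ℝ (Fin d)) ∈ convexHull ℝ S := by
      have hw₀ : (2 / ‖z₀‖ ^ 2) • z₀ ∈ S := ⟨z₀, hz₀Λ, hz₀, rfl⟩
      have hw₁ : (2 / ‖(-z₀ : EuclideanSpace ℝ (Fin d))‖ ^ 2) • (-z₀) ∈ S :=
        ⟨-z₀, hneg z₀ hz₀Λ, neg_ne_zero.mpr hz₀, rfl⟩
      have hmid := (convex_convexHull ℝ S) (subset_convexHull ℝ S hw₀)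
        (subset_convexHull ℝ S hw₁) (by norm_num : (0:ℝ) ≤ 1/2)
        (by norm_num : (0:ℝ) ≤ 1/2) (by norm_num)
      have heq0 : (1/2 : ℝ) • ((2 / ‖z₀‖ ^ 2) • z₀) +
          (1/2 : ℝ) • ((2 / ‖(-z₀ : EuclideanSpace ℝ (Fin d))‖ ^ 2) • (-z₀)) = 0 := by
        rw [norm_neg]
        module
      rwa [heq0] at hmid
    have hKeq : convexHull ℝ (S ∪ {0}) = convexHull ℝ S :=
      le_antisymm (convexHull_min (Set.union_subset (subset_convexHull ℝ S)
        (by simpa using h0K)) (convex_convexHull ℝ S))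
        (convexHull_mono Set.subset_union_left)
    have hK : IsCompact (convexHull ℝ S) := hKeq ▸ isCompact_convexHull_of_isCompact hScomp
    obtain ⟨f, u, hfa, hfy⟩ :=
      geometric_hahn_banach_closed_point (convex_convexHull ℝ S) hK.isClosed hyK
    have hu0 : 0 < u := by simpa using hfa 0 h0K
    set v := (InnerProductSpace.toDual ℝ (EuclideanSpace ℝ (Fin d))).symm f with hv
    have hvw : ∀ w : EuclideanSpace ℝ (Fin d), ⟪v, w⟫ = f w := fun w =>
      InnerProductSpace.toDual_symm_apply
    set L := Submodule.span ℝ Λ with hLdef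
    set x := u⁻¹ • v with hx
    set x₀ := (Submodule.orthogonalProjection L x : EuclideanSpace ℝ (Fin d)) with hx₀
    have hxinner : ∀ z, z ∈ L → ⟪x₀, z⟫ = ⟪x, z⟫ := by
      intro z hz
      have hmem : x - x₀ ∈ Lᗮ := by have := Submodule.sub_starProjection_mem_orthogonal (K := L) x; exact this
      have h0 := (Submodule.mem_orthogonal L (x - x₀)).mp hmem z hz
      have h2 : ⟪x - x₀, z⟫ = 0 := by rw [real_inner_comm]; exact h0
      rw [inner_sub_left] at h2
      linarith
    have hx₀Vor : x₀ ∈ VorCell Λ := by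
      rw [hVor]
      refine ⟨SetLike.coe_mem _, fun z hz => ?_⟩
      by_cases hz0 : z = 0
      · simp [hz0]
      · have hzL : z ∈ L := Submodule.subset_span hz
        rw [hxinner z hzL]
        have hzn : ‖z‖ ≠ 0 := norm_ne_zero_iff.mpr hz0
        have hz2 : (0:ℝ) < ‖z‖ ^ 2 := by positivity
        have hwS : (2 / ‖z‖ ^ 2) • z ∈ S := ⟨z, hz, hz0, rfl⟩
        have hfw := hfa _ (subset_convexHull ℝ S hwS)
        have hlt : ⟪x, (2 / ‖z‖ ^ 2) • z⟫ < 1 := by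
          rw [hx, real_inner_smul_left, hvw]
          calc u⁻¹ * f ((2 / ‖z‖ ^ 2) • z) < u⁻¹ * u :=
                mul_lt_mul_of_pos_left hfw (inv_pos.mpr hu0)
            _ = 1 := inv_mul_cancel₀ hu0.ne'
        rw [real_inner_smul_right, div_mul_eq_mul_div, div_lt_one hz2] at hlt
        linarith
    have hyL : y ∈ L := hy.1
    have h1 := hy.2 x₀ hx₀Vor
    rw [hxinner y hyL] at h1
    have h2 : (1:ℝ) < ⟪x, y⟫ := by
      rw [hx, real_inner_smul_left, hvw]
      calc (1:ℝ) = u⁻¹ * u := (inv_mul_cancel₀ hu0.ne').symm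
        _ < u⁻¹ * f y := mul_lt_mul_of_pos_left hfy (inv_pos.mpr hu0)
    linarith
  · -- S ⊆ dualVorCell
    rintro w ⟨z, hzΛ, hz0, rfl⟩
    have hz2 : (0 : ℝ) < ‖z‖ ^ 2 := by
      have : ‖z‖ ≠ 0 := norm_ne_zero_iff.mpr hz0
      positivity
    refine ⟨Submodule.smul_mem _ _ (Submodule.subset_span hzΛ), fun x hx => ?_⟩
    have h1 := ((hVor x).mp hx).2 z hzΛ
    rw [real_inner_smul_right, div_mul_eq_mul_div, div_le_one hz2]
    nlinarith
  · -- convexity of dualVorCell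
    intro y1 hy1 y2 hy2 a c ha hc hac
    refine ⟨Submodule.add_mem _ (Submodule.smul_mem _ _ hy1.1) (Submodule.smul_mem _ _ hy2.1),
      fun x hx => ?_⟩
    have h1 := hy1.2 x hx
    have h2 := hy2.2 x hx
    rw [inner_add_right, real_inner_smul_right, real_inner_smul_right]
    nlinarith
end

section
/- Let Λ ⊆ ℝ^d be a lattice and p ∈ ℝ^d with 0 ∈ cl(p,Λ) (the origin is among the lattice points closest to p). Then conv{ (2/‖z‖²)·z : z ∈ cl(p,Λ) \ {0} } is a face of VC(Λ)°, namely the face of VC(Λ)° on which the linear functional y ↦ ⟨p,y⟩ attains value 1. -/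
open scoped RealInnerProductSpace

lemma latticeFinite (d k : ℕ) (b : Fin k → EuclideanSpace ℝ (Fin d))
    (hb : LinearIndependent ℝ b) (r : ℝ) :
    ({x : EuclideanSpace ℝ (Fin d) | ∃ z : Fin k → ℤ, x = ∑ i, (z i : ℝ) • b i} ∩
      Metric.closedBall 0 r).Finite := by
  classical
  set f : (Fin k → ℝ) →ₗ[ℝ] EuclideanSpace ℝ (Fin d) :=
    Fintype.linearCombination ℝ b with hf
  have hfa : ∀ a : Fin k → ℝ, f a = ∑ i, a i • b i := fun a => rfl
  have hinj : Function.Injective f := by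
    intro a a' h
    have h0 : f (a - a') = 0 := by rw [map_sub, h, sub_self]
    rw [hfa] at h0
    simp only [Pi.sub_apply, sub_smul] at h0
    have := Fintype.linearIndependent_iff.mp hb (a - a') (by
      simpa [sub_smul] using h0)
    funext i
    have := this i
    simp only [Pi.sub_apply] at this
    linarith
  let e : (Fin k → ℝ) ≃ₗ[ℝ] LinearMap.range f := LinearEquiv.ofInjective f hinj
  let ce := e.toContinuousLinearEquiv
  set C : ℝ := ‖(ce.symm : LinearMap.range f →L[ℝ] (Fin k → ℝ))‖ with hC
  have hCb : ∀ a : Fin k → ℝ, ‖a‖ ≤ C * ‖f a‖ := by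
    intro a
    have h1 : ce.symm (ce a) = a := ce.symm_apply_apply a
    have h2 : ‖ce.symm (ce a)‖ ≤ C * ‖ce a‖ :=
      (ce.symm : LinearMap.range f →L[ℝ] (Fin k → ℝ)).le_opNorm (ce a)
    have h3 : ‖ce a‖ = ‖f a‖ := by
      have : ((ce a : LinearMap.range f) : EuclideanSpace ℝ (Fin d)) = f a := by
        show ((e a : LinearMap.range f) : EuclideanSpace ℝ (Fin d)) = f a
        simp [e, LinearEquiv.ofInjective_apply]
      rw [← this]
      rfl
    rw [h1, h3] at h2
    exact h2
  set N : ℤ := ⌈C * r⌉ with hN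
  have hfin : (Set.univ.pi fun _ : Fin k => (Set.Icc (-N) N : Set ℤ)).Finite :=
    Set.Finite.pi fun _ => Set.finite_Icc _ _
  apply Set.Finite.subset ((hfin.image (fun z : Fin k → ℤ => ∑ i, (z i : ℝ) • b i)))
  rintro x ⟨⟨z, rfl⟩, hxball⟩
  refine ⟨z, ?_, rfl⟩
  have hxr : ‖∑ i, (z i : ℝ) • b i‖ ≤ r := by
    rwa [← mem_closedBall_zero_iff]
  have hfz : f (fun i => (z i : ℝ)) = ∑ i, (z i : ℝ) • b i := hfa _
  have hCnn : 0 ≤ C := hC ▸ norm_nonneg ((ce.symm : LinearMap.range f →L[ℝ] (Fin k → ℝ)))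
  have hbound : ‖(fun i => (z i : ℝ) : Fin k → ℝ)‖ ≤ C * r := by
    calc ‖(fun i => (z i : ℝ) : Fin k → ℝ)‖ ≤ C * ‖f fun i => (z i : ℝ)‖ := hCb _
    _ ≤ C * r := by rw [hfz]; exact mul_le_mul_of_nonneg_left hxr hCnn
  intro i _
  have hi : |(z i : ℝ)| ≤ C * r := by
    have := norm_le_pi_norm (fun i => (z i : ℝ) : Fin k → ℝ) i
    simp only [Real.norm_eq_abs] at this
    linarith
  have hi3 : |z i| ≤ N := by
    rw [hN]
    exact_mod_cast hi.trans (Int.le_ceil (C * r))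
  simp only [Set.mem_Icc]
  exact abs_le.mp hi3

lemma cubeCover (d : ℕ) (a : ℝ) (ha : 0 ≤ a) :
    ∃ X : Set (EuclideanSpace ℝ (Fin d)), X.Finite ∧
      (∀ v ∈ X, ‖v‖ ≤ a * Real.sqrt d) ∧
      ∀ x : EuclideanSpace ℝ (Fin d), ‖x‖ ≤ a → x ∈ convexHull ℝ X := by
  classical
  let e : (Fin d → ℝ) →ₗ[ℝ] EuclideanSpace ℝ (Fin d) :=
    (WithLp.linearEquiv 2 ℝ (Fin d → ℝ)).symm.toLinearMap
  set S : Set (Fin d → ℝ) := Set.univ.pi fun _ => ({a, -a} : Set ℝ) with hS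
  have hSfin : S.Finite :=
    Set.Finite.pi fun _ => (Set.finite_singleton (-a)).insert a
  refine ⟨e '' S, hSfin.image _, ?_, ?_⟩
  · rintro v ⟨s, hs, rfl⟩
    have hcoord : ∀ i, ‖(e s : EuclideanSpace ℝ (Fin d)) i‖ ^ 2 = a ^ 2 := by
      intro i
      have hsi := hs i (Set.mem_univ i)
      have : (e s : EuclideanSpace ℝ (Fin d)) i = s i := rfl
      rw [this, Real.norm_eq_abs, sq_abs]
      rcases hsi with h | h <;> rw [h] <;> ring
    rw [EuclideanSpace.norm_eq]
    have : ∑ i, ‖(e s : EuclideanSpace ℝ (Fin d)) i‖ ^ 2 = (d : ℝ) * a ^ 2 := by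
      rw [Finset.sum_congr rfl fun i _ => hcoord i]
      simp [Finset.sum_const, Finset.card_univ, mul_comm]
    rw [this]
    rw [show (d : ℝ) * a ^ 2 = (a * Real.sqrt d) ^ 2 by
      rw [mul_pow, Real.sq_sqrt (Nat.cast_nonneg d)]; ring]
    rw [Real.sqrt_sq (by positivity)]
  · intro x hx
    have hcoord : ∀ i, |x i| ≤ a := by
      intro i
      have h1 : |x i| ≤ ‖x‖ := by
        rw [EuclideanSpace.norm_eq, ← Real.sqrt_sq_eq_abs]
        apply Real.sqrt_le_sqrt
        have := Finset.single_le_sum (f := fun j => ‖x j‖ ^ 2)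
          (fun j _ => sq_nonneg _) (Finset.mem_univ i)
        simpa [Real.norm_eq_abs, sq_abs] using this
      linarith
    have hmem : (WithLp.linearEquiv 2 ℝ (Fin d → ℝ)) x ∈ convexHull ℝ S := by
      apply mem_convexHull_pi
      intro i _
      rw [convexHull_pair, segment_eq_Icc' a (-a)]
      have hmin : min a (-a) = -a := min_eq_right (by linarith)
      have hmax : max a (-a) = a := max_eq_left (by linarith)
      rw [hmin, hmax]
      have h := abs_le.mp (hcoord i)
      exact Set.mem_Icc.mpr ⟨h.1, h.2⟩
    have : e ((WithLp.linearEquiv 2 ℝ (Fin d → ℝ)) x) = x := by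
      simp [e]
    rw [← this]
    rw [← LinearMap.image_convexHull] at *
    exact Set.mem_image_of_mem e hmem

lemma convexHull_eq_case {E : Type*} [NormedAddCommGroup E] [InnerProductSpace ℝ E]
    {p y : E} {s : Set E} (hs : ∀ v ∈ s, ⟪p, v⟫ ≤ 1) (hy : y ∈ convexHull ℝ s)
    (hpy : ⟪p, y⟫ = 1) : y ∈ convexHull ℝ {v | v ∈ s ∧ ⟪p, v⟫ = 1} := by
  classical
  rw [convexHull_eq] at hy
  obtain ⟨ι, t, w, z, hw0, hw1, hzs, hx⟩ := hy
  have hcm : t.centerMass w z = ∑ i ∈ t, w i • z i := Finset.centerMass_eq_of_sum_1 _ _ hw1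
  have hinner : ∑ i ∈ t, w i * ⟪p, z i⟫ = 1 := by
    rw [← hpy, ← hx, hcm, inner_sum]
    exact Finset.sum_congr rfl fun i _ => (real_inner_smul_right p (z i) (w i)).symm
  have hzero : ∀ i ∈ t, w i * (1 - ⟪p, z i⟫) = 0 := by
    have hsum : ∑ i ∈ t, w i * (1 - ⟪p, z i⟫) = 0 := by
      have : ∑ i ∈ t, w i * (1 - ⟪p, z i⟫) =
          (∑ i ∈ t, w i) - ∑ i ∈ t, w i * ⟪p, z i⟫ := by
        rw [← Finset.sum_sub_distrib]
        exact Finset.sum_congr rfl fun i _ => by ring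
      rw [this, hw1, hinner]; ring
    exact (Finset.sum_eq_zero_iff_of_nonneg fun i hi =>
      mul_nonneg (hw0 i hi) (by have := hs (z i) (hzs i hi); linarith)).mp hsum
  rw [← hx, ← Finset.centerMass_filter_ne_zero (w := w) z]
  apply Finset.centerMass_mem_convexHull
  · intro i hi
    exact hw0 i (Finset.mem_filter.mp hi).1
  · rw [Finset.sum_filter_ne_zero, hw1]
    exact one_pos
  · intro i hi
    obtain ⟨hit, hwi⟩ := Finset.mem_filter.mp hi
    refine ⟨hzs i hit, ?_⟩
    have := hzero i hit
    rcases mul_eq_zero.mp this with h | h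
    · exact absurd h hwi
    · linarith

/-- If `0` is among the lattice points closest to `p`, then
`conv{ (2/‖z‖²)·z : z ∈ cl(p,Λ) \ {0} }` is a face of `VC(Λ)°`, namely the
(exposed) face on which the linear functional `y ↦ ⟨p,y⟩` attains the value `1`. -/
theorem face_of_dual_voronoi_cell (d : ℕ) (Λ : Set (EuclideanSpace ℝ (Fin d)))
    (hΛ : IsLattice Λ) (p : EuclideanSpace ℝ (Fin d))
    (h0 : ∀ z ∈ Λ, ‖p‖ ≤ ‖p - z‖) :
    (∀ y ∈ dualVorCell Λ, ⟪p, y⟫ ≤ 1) ∧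
      convexHull ℝ {w : EuclideanSpace ℝ (Fin d) |
          ∃ z ∈ Λ, (∀ z' ∈ Λ, ‖p - z‖ ≤ ‖p - z'‖) ∧ z ≠ 0 ∧ w = (2 / ‖z‖ ^ 2) • z} =
        {y ∈ dualVorCell Λ | ⟪p, y⟫ = 1} := by
  classical
  have hfin : ∀ r : ℝ, (Λ ∩ Metric.closedBall 0 r).Finite := by
    intro r
    obtain ⟨k, b, hb, hEq⟩ := hΛ
    rw [hEq]
    exact latticeFinite d k b hb r
  have h0Λ : (0 : EuclideanSpace ℝ (Fin d)) ∈ Λ := by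
    obtain ⟨k, b, hb, hEq⟩ := hΛ
    rw [hEq]
    exact ⟨0, by simp⟩
  have hsq : ∀ x z : EuclideanSpace ℝ (Fin d), ‖x‖ ≤ ‖x - z‖ ↔ 2 * ⟪x, z⟫ ≤ ‖z‖ ^ 2 := by
    intro x z
    have h1 : ‖x - z‖ ^ 2 = ‖x‖ ^ 2 - 2 * ⟪x, z⟫ + ‖z‖ ^ 2 := norm_sub_sq_real x z
    constructor
    · intro h; nlinarith [norm_nonneg x, norm_nonneg (x - z)]
    · intro h; nlinarith [norm_nonneg x, norm_nonneg (x - z)]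
  have hpz : ∀ z ∈ Λ, 2 * ⟪p, z⟫ ≤ ‖z‖ ^ 2 := fun z hz => (hsq p z).1 (h0 z hz)
  have hclosest : ∀ z ∈ Λ, (∀ z' ∈ Λ, ‖p - z‖ ≤ ‖p - z'‖) ↔ 2 * ⟪p, z⟫ = ‖z‖ ^ 2 := by
    intro z hz
    constructor
    · intro h
      have h1 : ‖p - z‖ ≤ ‖p‖ := by simpa using h 0 h0Λ
      have h3 : ‖p - z‖ = ‖p‖ := le_antisymm h1 (h0 z hz)
      have h4 : ‖p - z‖ ^ 2 = ‖p‖ ^ 2 - 2 * ⟪p, z⟫ + ‖z‖ ^ 2 := norm_sub_sq_real p z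
      rw [h3] at h4
      linarith
    · intro h z' hz'
      have h4 : ‖p - z‖ ^ 2 = ‖p‖ ^ 2 - 2 * ⟪p, z⟫ + ‖z‖ ^ 2 := norm_sub_sq_real p z
      have h5 : ‖p - z‖ ^ 2 = ‖p‖ ^ 2 := by rw [h4]; linarith
      have h6 : ‖p - z‖ = ‖p‖ := by
        nlinarith [norm_nonneg (p - z), norm_nonneg p]
      rw [h6]
      exact h0 z' hz'
  set V : Submodule ℝ (EuclideanSpace ℝ (Fin d)) := Submodule.span ℝ Λ with hV
  have hproj : ∀ w : EuclideanSpace ℝ (Fin d), ∀ v ∈ V,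
      ⟪w - (Submodule.orthogonalProjection V w : EuclideanSpace ℝ (Fin d)), v⟫ = 0 := by
    intro w v hv
    have h := Submodule.sub_starProjection_mem_orthogonal (K := V) w
    exact (Submodule.mem_orthogonal' V _).mp h v hv
  -- Part 1
  have part1 : ∀ y ∈ dualVorCell Λ, ⟪p, y⟫ ≤ 1 := by
    rintro y ⟨hyV, hy1⟩
    set P : EuclideanSpace ℝ (Fin d) := (Submodule.orthogonalProjection V p : EuclideanSpace ℝ (Fin d))
      with hP
    have hPV : P ∈ V := SetLike.coe_mem _
    have hPVor : P ∈ VorCell Λ := by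
      refine ⟨hPV, fun z hz => ?_⟩
      rw [hsq]
      have hzV : z ∈ V := Submodule.subset_span hz
      have hp0 : ⟪p - P, z⟫ = 0 := hproj p z hzV
      rw [inner_sub_left] at hp0
      have := hpz z hz
      linarith
    have h1 : ⟪p - P, y⟫ = 0 := hproj p y hyV
    rw [inner_sub_left] at h1
    have h2 := hy1 P hPVor
    linarith
  refine ⟨part1, Set.Subset.antisymm ?_ ?_⟩
  · -- ⊆
    apply convexHull_min
    · rintro w ⟨z, hz, hcl, hz0, rfl⟩
      have hz2 : (0 : ℝ) < ‖z‖ ^ 2 := by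
        have : 0 < ‖z‖ := norm_pos_iff.mpr hz0
        positivity
      have heq : 2 * ⟪p, z⟫ = ‖z‖ ^ 2 := (hclosest z hz).1 hcl
      refine ⟨⟨Submodule.smul_mem _ _ (Submodule.subset_span hz), fun x hx => ?_⟩, ?_⟩
      · rw [real_inner_smul_right]
        have hle := (hsq x z).1 (hx.2 z hz)
        have h' : 2 / ‖z‖ ^ 2 * ⟪x, z⟫ = 2 * ⟪x, z⟫ / ‖z‖ ^ 2 := by ring
        rw [h']
        exact (div_le_one hz2).2 hle
      · show ⟪p, (2 / ‖z‖ ^ 2) • z⟫ = 1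
        rw [real_inner_smul_right]
        have h' : 2 / ‖z‖ ^ 2 * ⟪p, z⟫ = 2 * ⟪p, z⟫ / ‖z‖ ^ 2 := by ring
        rw [h', heq, div_self (ne_of_gt hz2)]
    · -- convexity of RHS
      rintro y₁ ⟨⟨h1V, h1le⟩, h1eq⟩ y₂ ⟨⟨h2V, h2le⟩, h2eq⟩ a c ha hc hac
      refine ⟨⟨V.add_mem (V.smul_mem _ h1V) (V.smul_mem _ h2V), fun x hx => ?_⟩, ?_⟩
      · rw [inner_add_right, real_inner_smul_right, real_inner_smul_right]
        have e1 : a * ⟪x, y₁⟫ ≤ a * 1 := mul_le_mul_of_nonneg_left (h1le x hx) ha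
        have e2 : c * ⟪x, y₂⟫ ≤ c * 1 := mul_le_mul_of_nonneg_left (h2le x hx) hc
        linarith
      · show ⟪p, a • y₁ + c • y₂⟫ = 1
        rw [inner_add_right, real_inner_smul_right, real_inner_smul_right, h1eq, h2eq]
        linarith
  · -- ⊇
    rintro y ⟨⟨hyV, hy1⟩, hpy⟩
    set R : ℝ := 2 * (‖p‖ + 1) * (Real.sqrt d + 1) with hR
    have hsd : 0 ≤ Real.sqrt d := Real.sqrt_nonneg _
    have hRpos : 0 < R := by
      rw [hR]; positivity
    obtain ⟨X, hXfin, hXnorm, hXcover⟩ := cubeCover d (2 / R) (by positivity)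
    set W : Set (EuclideanSpace ℝ (Fin d)) :=
      (fun z : EuclideanSpace ℝ (Fin d) => (2 / ‖z‖ ^ 2) • z) ''
        ((Λ ∩ Metric.closedBall 0 R) \ {0}) with hW
    have hWfin : W.Finite := ((hfin R).diff (t := {0})).image _
    set K : Set (EuclideanSpace ℝ (Fin d)) := insert 0 (W ∪ X) with hK
    have hKfin : K.Finite := (hWfin.union hXfin).insert 0
    have hwK : ∀ z ∈ Λ, z ≠ 0 → (2 / ‖z‖ ^ 2) • z ∈ convexHull ℝ K := by
      intro z hz hz0
      have hzpos : 0 < ‖z‖ := norm_pos_iff.mpr hz0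
      by_cases hzR : ‖z‖ ≤ R
      · apply subset_convexHull
        refine Set.mem_insert_of_mem _ (Or.inl ?_)
        exact ⟨z, ⟨⟨hz, mem_closedBall_zero_iff.mpr hzR⟩, by simpa using hz0⟩, rfl⟩
      · apply convexHull_mono (show X ⊆ K from fun v hv =>
          Set.mem_insert_of_mem _ (Or.inr hv))
        apply hXcover
        have hnorm : ‖(2 / ‖z‖ ^ 2) • z‖ = 2 / ‖z‖ := by
          rw [norm_smul, Real.norm_eq_abs, abs_of_pos (by positivity)]
          field_simp
        rw [hnorm]
        have : R ≤ ‖z‖ := le_of_lt (lt_of_not_ge hzR)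
        gcongr
    have hyK : y ∈ convexHull ℝ K := by
      by_contra hyKn
      obtain ⟨f, u, hfa, hfy⟩ := geometric_hahn_banach_closed_point
        (convex_convexHull ℝ K) (hKfin.isClosed_convexHull (𝕜 := ℝ)) hyKn
      have hu0 : 0 < u := by
        have := hfa 0 (subset_convexHull ℝ K (Set.mem_insert 0 _))
        simpa using this
      set c : EuclideanSpace ℝ (Fin d) :=
        (InnerProductSpace.toDual ℝ (EuclideanSpace ℝ (Fin d))).symm f with hc
      have hcf : ∀ w : EuclideanSpace ℝ (Fin d), ⟪c, w⟫ = f w := fun w =>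
        InnerProductSpace.toDual_symm_apply
      set cp : EuclideanSpace ℝ (Fin d) :=
        (Submodule.orthogonalProjection V c : EuclideanSpace ℝ (Fin d)) with hcp
      have hcpv : ∀ v ∈ V, ⟪cp, v⟫ = f v := by
        intro v hv
        have h := hproj c v hv
        rw [inner_sub_left] at h
        rw [← hcf]
        linarith
      set x : EuclideanSpace ℝ (Fin d) := u⁻¹ • cp with hx
      have hxV : x ∈ V := V.smul_mem _ (SetLike.coe_mem _)
      have hxVor : x ∈ VorCell Λ := by
        refine ⟨hxV, fun z hz => ?_⟩
        rcases eq_or_ne z 0 with rfl | hz0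
        · simp
        · rw [hsq]
          have hz2 : (0 : ℝ) < ‖z‖ ^ 2 := by
            have : 0 < ‖z‖ := norm_pos_iff.mpr hz0
            positivity
          have hzV : z ∈ V := Submodule.subset_span hz
          have hwz := hfa _ (hwK z hz hz0)
          have e2 : f ((2 / ‖z‖ ^ 2) • z) = 2 / ‖z‖ ^ 2 * ⟪c, z⟫ := by
            rw [← hcf, real_inner_smul_right]
          rw [e2] at hwz
          have e3 : 2 * ⟪c, z⟫ < u * ‖z‖ ^ 2 := by
            have h4 := mul_lt_mul_of_pos_right hwz hz2
            have e4 : 2 / ‖z‖ ^ 2 * ⟪c, z⟫ * ‖z‖ ^ 2 = 2 * ⟪c, z⟫ := by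
              field_simp
            rw [e4] at h4
            linarith [h4]
          have e5 : 2 * ⟪x, z⟫ = u⁻¹ * (2 * ⟪c, z⟫) := by
            rw [hx, real_inner_smul_left]
            have := hcpv z hzV
            rw [← hcf z] at this
            rw [this]
            ring
          rw [e5]
          have h6 := mul_lt_mul_of_pos_left e3 (inv_pos.2 hu0)
          have h7 : u⁻¹ * (u * ‖z‖ ^ 2) = ‖z‖ ^ 2 := by
            field_simp
          rw [h7] at h6
          exact le_of_lt h6
      have hcontra := hy1 x hxVor
      have e6 : ⟪x, y⟫ = u⁻¹ * f y := by
        rw [hx, real_inner_smul_left, hcpv y hyV]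
      have e7 : 1 < ⟪x, y⟫ := by
        rw [e6]
        have h8 := mul_lt_mul_of_pos_left hfy (inv_pos.2 hu0)
        have h9 : u⁻¹ * u = 1 := by field_simp
        rw [h9] at h8
        exact h8
      linarith
    have hK1 : ∀ v ∈ K, ⟪p, v⟫ ≤ 1 ∧ (⟪p, v⟫ = 1 → v ∈
        {w : EuclideanSpace ℝ (Fin d) |
          ∃ z ∈ Λ, (∀ z' ∈ Λ, ‖p - z‖ ≤ ‖p - z'‖) ∧ z ≠ 0 ∧ w = (2 / ‖z‖ ^ 2) • z}) := by
      intro v hv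
      rcases Set.mem_insert_iff.mp hv with rfl | hv'
      · constructor
        · simp
        · intro h1
          simp at h1
      rcases hv' with hvW | hvX
      · obtain ⟨z, ⟨⟨hzΛ, _⟩, hz0'⟩, rfl⟩ := hvW
        have hz0 : z ≠ 0 := by simpa using hz0'
        have hz2 : (0 : ℝ) < ‖z‖ ^ 2 := by
          have : 0 < ‖z‖ := norm_pos_iff.mpr hz0
          positivity
        constructor
        · rw [real_inner_smul_right]
          have h' : 2 / ‖z‖ ^ 2 * ⟪p, z⟫ = 2 * ⟪p, z⟫ / ‖z‖ ^ 2 := by ring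
          rw [h']
          exact (div_le_one hz2).2 (hpz z hzΛ)
        · intro h1
          rw [real_inner_smul_right] at h1
          have h2 : 2 * ⟪p, z⟫ = ‖z‖ ^ 2 := by
            have h' : 2 / ‖z‖ ^ 2 * ⟪p, z⟫ = 2 * ⟪p, z⟫ / ‖z‖ ^ 2 := by ring
            rw [h'] at h1
            exact (div_eq_one_iff_eq (ne_of_gt hz2)).mp h1
          exact ⟨z, hzΛ, (hclosest z hzΛ).2 h2, hz0, rfl⟩
      · have hb := hXnorm v hvX
        have h2 : ⟪p, v⟫ ≤ ‖p‖ * ‖v‖ := real_inner_le_norm p v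
        have h3 : ‖p‖ * ‖v‖ ≤ ‖p‖ * (2 / R * Real.sqrt d) :=
          mul_le_mul_of_nonneg_left hb (norm_nonneg p)
        have key : ‖p‖ * 2 * Real.sqrt d < R := by
          rw [hR]
          nlinarith [norm_nonneg p, hsd]
        have h4 : ‖p‖ * (2 / R * Real.sqrt d) < 1 := by
          have h5 : ‖p‖ * (2 / R * Real.sqrt d) = (‖p‖ * 2 * Real.sqrt d) / R := by
            field_simp
          rw [h5]
          exact (div_lt_one hRpos).2 key
        constructor
        · linarith
        · intro h1
          linarith
    have hy2 := convexHull_eq_case (p := p) (y := y) (s := K)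
      (fun v hv => (hK1 v hv).1) hyK hpy
    exact convexHull_mono (fun v hv => (hK1 v hv.1).2 hv.2) hy2
end

section
/- The dual polytope of the Voronoi cell of the root lattice A_d equals S + (−S), where S = conv{e_1,…,e_{d+1}} is the standard simplex, i.e., VC(A_d)° = {x − y : x, y ∈ S} within the hyperplane {x : Σ x_i = 0}. Consequently xc(VC(A_d)) ≤ 2(d+1). -/
open scoped RealInnerProductSpace

/-- A polytope: the convex hull of finitely many points. -/
def IsPolytope {E : Type*} [AddCommGroup E] [Module ℝ E] (P : Set E) : Prop :=
  ∃ s : Finset E, P = convexHull ℝ (s : Set E)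

/-- The extension complexity of `P`: the minimal number of (facet-defining)
inequalities of a polytope (a bounded polyhedron, in any dimension) that linearly
projects onto `P`. -/
noncomputable def xc {E : Type*} [AddCommGroup E] [Module ℝ E] (P : Set E) : ℕ :=
  sInf {m | ∃ (n : ℕ) (A : Fin m → Fin n → ℝ) (b : Fin m → ℝ)
      (π : (Fin n → ℝ) →ₗ[ℝ] E),
      Bornology.IsBounded {x : Fin n → ℝ | ∀ i, ∑ j, A i j * x j ≤ b i} ∧
      π '' {x : Fin n → ℝ | ∀ i, ∑ j, A i j * x j ≤ b i} = P}

open scoped Pointwise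

/-- The root lattice `A_d = {x ∈ ℤ^{d+1} : Σ_i x(i) = 0}`. -/
def rootLatticeA (d : ℕ) : Set (EuclideanSpace ℝ (Fin (d + 1))) :=
  {x | (∀ i, ∃ z : ℤ, x i = (z : ℝ)) ∧ ∑ i, x i = 0}

/-- The Voronoi cell of `A_d` (within its linear hull, the hyperplane `Σ x_i = 0`). -/
def vorCellA (d : ℕ) : Set (EuclideanSpace ℝ (Fin (d + 1))) :=
  {x | (∑ i, x i = 0) ∧ ∀ z ∈ rootLatticeA d, ‖x‖ ≤ ‖x - z‖}

/-- The standard simplex `S = conv{e_1, …, e_{d+1}}`. -/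
def stdSimplex' (d : ℕ) : Set (EuclideanSpace ℝ (Fin (d + 1))) :=
  convexHull ℝ (Set.range fun i => EuclideanSpace.single i (1 : ℝ))

lemma eucl_sum_apply {n : ℕ} {α : Type*} (s : Finset α) (f : α → EuclideanSpace ℝ (Fin n)) (j : Fin n) :
    (∑ i ∈ s, f i) j = ∑ i ∈ s, f i j := by
  induction s using Finset.cons_induction with
  | empty => rfl
  | cons a s ha ih => rw [Finset.sum_cons, Finset.sum_cons, PiLp.add_apply, ih]

lemma stdSimplex'_eq (d : ℕ) :
    stdSimplex' d = {y : EuclideanSpace ℝ (Fin (d+1)) | (∀ i, 0 ≤ y i) ∧ ∑ i, y i = 1} := by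
  apply Set.Subset.antisymm
  · apply convexHull_min
    · rintro _ ⟨i, rfl⟩
      constructor
      · intro j; simp [EuclideanSpace.single_apply]; positivity
      · simp [EuclideanSpace.single_apply]
    · rintro y ⟨hy0, hy1⟩ z ⟨hz0, hz1⟩ a b ha hb hab
      have key : ∀ i, (a • y + b • z) i = a * y i + b * z i := by
        intro i; simp [PiLp.add_apply, PiLp.smul_apply, smul_eq_mul]
      constructor
      · intro i
        rw [key]
        exact add_nonneg (mul_nonneg ha (hy0 i)) (mul_nonneg hb (hz0 i))
      · simp_rw [key, Finset.sum_add_distrib, ← Finset.mul_sum, hy1, hz1]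
        linarith
  · rintro y ⟨hy0, hy1⟩
    have := Finset.centerMass_mem_convexHull (t := (Finset.univ : Finset (Fin (d+1))))
      (w := fun i => y i) (z := fun i => EuclideanSpace.single i (1:ℝ))
      (fun i _ => hy0 i) (by rw [hy1]; norm_num)
      (fun i _ => Set.mem_range_self i)
    convert this using 1
    · rfl
    unfold Finset.centerMass
    rw [hy1]
    ext j
    simp only [inv_one, one_smul]
    rw [eucl_sum_apply]
    simp [PiLp.smul_apply, EuclideanSpace.single_apply, smul_eq_mul]

lemma eucl_inner (n : ℕ) (x y : EuclideanSpace ℝ (Fin n)) : ⟪x, y⟫ = ∑ i, x i * y i := by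
  simp [PiLp.inner_apply, RCLike.inner_apply, mul_comm]

lemma norm_le_norm_sub_iff {n : ℕ} (x z : EuclideanSpace ℝ (Fin n)) :
    ‖x‖ ≤ ‖x - z‖ ↔ 2 * ⟪x, z⟫ ≤ ⟪z, z⟫ := by
  rw [← pow_le_pow_iff_left₀ (norm_nonneg x) (norm_nonneg _) (two_ne_zero),
    ← real_inner_self_eq_norm_sq, ← real_inner_self_eq_norm_sq, inner_sub_sub_self]
  constructor <;> intro h <;> nlinarith [real_inner_comm x z]

lemma vorCellA_eq (d : ℕ) :
    vorCellA d = {x : EuclideanSpace ℝ (Fin (d+1)) |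
      (∑ i, x i = 0) ∧ ∀ i j, x i - x j ≤ 1} := by
  ext x
  simp only [vorCellA, Set.mem_setOf_eq, and_congr_right_iff]
  intro hsum
  constructor
  · intro h i j
    rcases eq_or_ne i j with rfl | hij
    · simp
    · set z : EuclideanSpace ℝ (Fin (d+1)) :=
        EuclideanSpace.single i (1:ℝ) - EuclideanSpace.single j (1:ℝ) with hz
      have hzval : ∀ k, z k = (if k = i then (1:ℝ) else 0) - (if k = j then (1:ℝ) else 0) := by
        intro k; simp [hz, PiLp.sub_apply, EuclideanSpace.single_apply]
      have hzmem : z ∈ rootLatticeA d := by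
        constructor
        · intro k
          rw [hzval k]
          by_cases h1 : k = i
          · exact ⟨1, by simp [h1, hij, (h1 ▸ hij : k ≠ j)]⟩
          · by_cases h2 : k = j
            · exact ⟨-1, by simp [h2, Ne.symm hij]⟩
            · exact ⟨0, by simp [h1, h2]⟩
        · simp [hzval, Finset.sum_sub_distrib]
      have := (norm_le_norm_sub_iff x z).mp (h z hzmem)
      rw [eucl_inner, eucl_inner] at this
      have hxz : ∑ k, x k * z k = x i - x j := by
        simp [hzval, mul_sub, Finset.sum_sub_distrib, mul_ite, mul_comm, sub_mul, ite_mul]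
      have hzz : ∑ k, z k * z k = 2 := by
        have : ∀ k, z k * z k = (if k = i then 1 else 0) + (if k = j then 1 else 0) := by
          intro k
          by_cases h1 : k = i
          · subst h1; rw [hzval]; simp [hij]
          · by_cases h2 : k = j
            · subst h2; rw [hzval]; simp [h1, Ne.symm h1]
            · rw [hzval]; simp [h1, h2]
        simp [this, Finset.sum_add_distrib, hij]
        norm_num
      rw [hxz, hzz] at this
      linarith
  · intro h z hz
    rw [norm_le_norm_sub_iff, eucl_inner, eucl_inner]
    obtain ⟨hzint, hzsum⟩ := hz
    -- max and min of x
    obtain ⟨i0, -, hi0⟩ := Finset.exists_max_image Finset.univ (fun i => x i) ⟨0, Finset.mem_univ 0⟩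
    obtain ⟨j0, -, hj0⟩ := Finset.exists_min_image Finset.univ (fun i => x i) ⟨0, Finset.mem_univ 0⟩
    set k : ℝ := ∑ i, max (z i) 0 with hk
    have hk0 : 0 ≤ k := Finset.sum_nonneg fun i _ => le_max_right _ _
    have hneg : ∑ i, max (-z i) 0 = k := by
      have e : ∀ i, max (-z i) 0 = max (z i) 0 - z i := by
        intro i; rcases le_or_gt (z i) 0 with h' | h'
        · rw [max_eq_left (by linarith), max_eq_right h']; ring
        · rw [max_eq_right (by linarith), max_eq_left h'.le]; ring
      rw [Finset.sum_congr rfl fun i _ => e i, Finset.sum_sub_distrib, hzsum, sub_zero]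
    -- ∑ x z ≤ k
    have h1 : ∑ i, x i * z i ≤ k := by
      have hsplit : ∀ i, x i * z i = x i * max (z i) 0 - x i * max (-z i) 0 := by
        intro i; rcases le_or_gt (z i) 0 with h' | h'
        · rw [max_eq_right h', max_eq_left (by linarith)]; ring
        · rw [max_eq_left h'.le, max_eq_right (by linarith)]; ring
      calc ∑ i, x i * z i = ∑ i, x i * max (z i) 0 - ∑ i, x i * max (-z i) 0 := by
            rw [← Finset.sum_sub_distrib]; exact Finset.sum_congr rfl fun i _ => hsplit i
        _ ≤ ∑ i, x i0 * max (z i) 0 - ∑ i, x j0 * max (-z i) 0 := by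
            apply sub_le_sub
            · exact Finset.sum_le_sum fun i _ =>
                mul_le_mul_of_nonneg_right (hi0 i (Finset.mem_univ i)) (le_max_right _ _)
            · exact Finset.sum_le_sum fun i _ =>
                mul_le_mul_of_nonneg_right (hj0 i (Finset.mem_univ i)) (le_max_right _ _)
        _ = (x i0 - x j0) * k := by rw [← Finset.mul_sum, ← Finset.mul_sum, hneg, ← hk]; ring
        _ ≤ 1 * k := mul_le_mul_of_nonneg_right (h i0 j0) hk0
        _ = k := one_mul k
    -- 2k ≤ ∑ z z
    have h2 : 2 * k ≤ ∑ i, z i * z i := by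
      have : ∀ i, max (z i) 0 + max (-z i) 0 ≤ z i * z i := by
        intro i
        obtain ⟨m, hm⟩ := hzint i
        rw [hm]
        rcases eq_or_ne m 0 with rfl | hm0
        · simp
        · have h1 : (1:ℝ) ≤ |(m:ℝ)| := by
            rw [← Int.cast_abs]; exact_mod_cast Int.one_le_abs hm0
          have habs : max ((m:ℝ)) 0 + max (-(m:ℝ)) 0 = |(m:ℝ)| := by
            rcases le_or_gt ((m:ℝ)) 0 with h' | h'
            · rw [max_eq_right h', max_eq_left (by linarith), abs_of_nonpos h']; ring
            · rw [max_eq_left h'.le, max_eq_right (by linarith), abs_of_pos h']; ring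
          rw [habs]
          nlinarith [abs_nonneg ((m:ℝ)), sq_abs ((m:ℝ))]
      calc 2 * k = ∑ i, (max (z i) 0 + max (-z i) 0) := by
            rw [Finset.sum_add_distrib, hneg, ← hk]; ring
        _ ≤ ∑ i, z i * z i := Finset.sum_le_sum fun i _ => this i
    linarith

def cubeA (d : ℕ) : Fin (2*(d+1)) → Fin (d+1) → ℝ := fun i j =>
  if (i:ℕ) = (j:ℕ) then 1 else if (i:ℕ) = (j:ℕ) + (d+1) then -1 else 0

def cubeB (d : ℕ) : Fin (2*(d+1)) → ℝ := fun i => if (i:ℕ) < d+1 then 1 else 0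

lemma cube_row (d : ℕ) (i : Fin (2*(d+1))) (x : Fin (d+1) → ℝ) :
    ∑ j, cubeA d i j * x j =
      if h : (i:ℕ) < d+1 then x ⟨(i:ℕ), h⟩
      else -x ⟨(i:ℕ)-(d+1), by have := i.isLt; omega⟩ := by
  split
  next h =>
    rw [Finset.sum_congr rfl (fun j _ => show cubeA d i j * x j
        = if j = ⟨(i:ℕ), h⟩ then x j else 0 from by
      unfold cubeA
      rcases eq_or_ne j (⟨(i:ℕ), h⟩ : Fin (d+1)) with rfl | hj
      · simp
      · have h1 : (i:ℕ) ≠ (j:ℕ) := fun hc => hj (Fin.ext hc.symm)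
        have h2 : (i:ℕ) ≠ (j:ℕ) + (d+1) := by omega
        simp [h1, h2, hj])]
    simp [Finset.sum_ite_eq']
  next h =>
    have hi := i.isLt
    rw [Finset.sum_congr rfl (fun j _ => show cubeA d i j * x j
        = if j = (⟨(i:ℕ)-(d+1), by omega⟩ : Fin (d+1)) then -x j else 0 from by
      unfold cubeA
      rcases eq_or_ne j (⟨(i:ℕ)-(d+1), by omega⟩ : Fin (d+1)) with rfl | hj
      · simp only [Fin.val_mk, if_pos rfl]
        rw [if_neg (by omega : ¬ (i:ℕ) = (i:ℕ)-(d+1)),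
          if_pos (by omega : (i:ℕ) = ((i:ℕ)-(d+1)) + (d+1))]
        norm_num
      · have h1 : (i:ℕ) ≠ (j:ℕ) := by have := j.isLt; omega
        have h2 : (i:ℕ) ≠ (j:ℕ) + (d+1) := fun hc => hj (Fin.ext (show (j:ℕ) = (i:ℕ)-(d+1) by omega))
        simp [h1, h2, hj])]
    simp [Finset.sum_ite_eq']

lemma cube_feasible (d : ℕ) (x : Fin (d+1) → ℝ) :
    (∀ i, ∑ j, cubeA d i j * x j ≤ cubeB d i) ↔ ∀ j, 0 ≤ x j ∧ x j ≤ 1 := by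
  constructor
  · intro h j
    constructor
    · have := h ⟨(j:ℕ) + (d+1), by have := j.isLt; omega⟩
      rw [cube_row] at this
      have hlt : ¬ ((j:ℕ) + (d+1) < d+1) := by omega
      rw [dif_neg hlt] at this
      unfold cubeB at this
      simp only [hlt, if_neg, Fin.val_mk] at this
      have : -x ⟨(j:ℕ) + (d+1) - (d+1), by have := j.isLt; omega⟩ ≤ 0 := by
        simpa [hlt] using this
      have hj : (⟨(j:ℕ) + (d+1) - (d+1), by have := j.isLt; omega⟩ : Fin (d+1)) = j := by
        ext; simp
      rw [hj] at this; linarith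
    · have := h ⟨(j:ℕ), by have := j.isLt; omega⟩
      rw [cube_row] at this
      have hlt : ((j:ℕ) : ℕ) < d+1 := j.isLt
      rw [dif_pos hlt] at this
      have hj : (⟨(j:ℕ), hlt⟩ : Fin (d+1)) = j := by ext; simp
      rw [hj] at this
      simpa [cubeB, hlt] using this
  · intro h i
    rw [cube_row]
    split
    next hi => simpa [cubeB, hi] using (h _).2
    next hi =>
      have := (h ⟨(i:ℕ)-(d+1), by have := i.isLt; omega⟩).1
      simp only [cubeB, hi, if_neg]
      simpa [hi] using neg_nonpos.mpr this

noncomputable def projL (d : ℕ) : (Fin (d+1) → ℝ) →ₗ[ℝ] EuclideanSpace ℝ (Fin (d+1)) where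
  toFun x := (WithLp.equiv 2 (Fin (d+1) → ℝ)).symm (fun j => x j - (∑ i, x i)/(d+1))
  map_add' x y := by
    ext j
    simp only [WithLp.equiv_symm_apply, PiLp.toLp_apply, PiLp.add_apply, Pi.add_apply, Finset.sum_add_distrib]
    ring
  map_smul' c x := by
    ext j
    simp only [WithLp.equiv_symm_apply, PiLp.toLp_apply, PiLp.smul_apply, Pi.smul_apply, smul_eq_mul,
      RingHom.id_apply, ← Finset.mul_sum]
    ring

lemma projL_apply (d : ℕ) (x : Fin (d+1) → ℝ) (j : Fin (d+1)) :
    projL d x j = x j - (∑ i, x i)/(d+1) := rfl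

lemma xc_vor_le (d : ℕ) : xc (vorCellA d) ≤ 2 * (d + 1) := by
  apply Nat.sInf_le
  refine ⟨d+1, cubeA d, cubeB d, projL d, ?_, ?_⟩
  · apply Metric.isBounded_closedBall (x := (0 : Fin (d+1) → ℝ)) (r := 1) |>.subset
    intro x hx
    rw [Set.mem_setOf_eq, cube_feasible] at hx
    rw [Metric.mem_closedBall, dist_pi_le_iff zero_le_one]
    intro j
    rw [Real.dist_eq, Pi.zero_apply, sub_zero, abs_le]
    exact ⟨by linarith [(hx j).1], (hx j).2⟩
  · rw [vorCellA_eq]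
    ext y
    constructor
    · rintro ⟨x, hx, rfl⟩
      rw [Set.mem_setOf_eq, cube_feasible] at hx
      constructor
      · have : ∀ j, projL d x j = x j - (∑ i, x i)/(d+1) := fun j => rfl
        simp_rw [this, Finset.sum_sub_distrib, Finset.sum_const, Finset.card_univ,
          Fintype.card_fin, nsmul_eq_mul]
        field_simp
        push_cast; ring
      · intro i j
        rw [projL_apply, projL_apply]
        have h1 := (hx i).2
        have h2 := (hx j).1
        linarith
    · rintro ⟨hsum, hpair⟩
      obtain ⟨j0, -, hj0⟩ := Finset.exists_min_image Finset.univ (fun i => y i)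
        ⟨0, Finset.mem_univ 0⟩
      refine ⟨fun j => y j - y j0, ?_, ?_⟩
      · rw [Set.mem_setOf_eq, cube_feasible]
        intro j
        exact ⟨by have := hj0 j (Finset.mem_univ j); linarith, by linarith [hpair j j0]⟩
      · ext j
        rw [projL_apply]
        have : ∑ i, (y i - y j0) = -((d+1 : ℝ) * y j0) := by
          rw [Finset.sum_sub_distrib, hsum, Finset.sum_const, Finset.card_univ,
            Fintype.card_fin, nsmul_eq_mul]
          push_cast; ring
        rw [this]
        have hd : ((d:ℝ)+1) ≠ 0 := by positivity
        field_simp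
        ring

lemma dual_eq (d : ℕ) :
    {y : EuclideanSpace ℝ (Fin (d + 1)) |
        (∑ i, y i = 0) ∧ ∀ x ∈ vorCellA d, ⟪x, y⟫ ≤ 1} =
      stdSimplex' d + -stdSimplex' d := by
  have hd : ((d:ℝ)+1) ≠ 0 := by positivity
  ext y
  rw [Set.mem_setOf_eq, stdSimplex'_eq]
  constructor
  · rintro ⟨hsum, hdual⟩
    set k : ℝ := ∑ i, max (y i) 0 with hk
    have hk0 : 0 ≤ k := Finset.sum_nonneg fun i _ => le_max_right _ _
    have hneg : ∑ i, max (-y i) 0 = k := by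
      have e : ∀ i, max (-y i) 0 = max (y i) 0 - y i := by
        intro i; rcases le_or_gt (y i) 0 with h' | h'
        · rw [max_eq_left (by linarith), max_eq_right h']; ring
        · rw [max_eq_right (by linarith), max_eq_left h'.le]; ring
      rw [Finset.sum_congr rfl fun i _ => e i, Finset.sum_sub_distrib, hsum, sub_zero]
    -- k ≤ 1 via a test point in the Voronoi cell
    have hk1 : k ≤ 1 := by
      set a : ℝ := ((Finset.univ.filter (fun i => 0 < y i)).card : ℝ) with ha
      set x : EuclideanSpace ℝ (Fin (d+1)) := (WithLp.equiv 2 (Fin (d+1) → ℝ)).symm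
        (fun i => (if 0 < y i then (1:ℝ) else 0) - a/(d+1)) with hxdef
      have hxapp : ∀ i, x i = (if 0 < y i then (1:ℝ) else 0) - a/(d+1) := fun i => rfl
      have hxmem : x ∈ vorCellA d := by
        rw [vorCellA_eq]
        constructor
        · simp_rw [hxapp, Finset.sum_sub_distrib, Finset.sum_boole, Finset.sum_const,
            Finset.card_univ, Fintype.card_fin, nsmul_eq_mul]
          push_cast
          rw [mul_div_cancel₀ _ hd, ha, sub_self]
        · intro i j
          rw [hxapp, hxapp]
          rcases ite_eq_or_eq (0 < y i) (1:ℝ) 0 with h1 | h1 <;>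
            rcases ite_eq_or_eq (0 < y j) (1:ℝ) 0 with h2 | h2 <;>
              rw [h1, h2] <;> linarith
      have hxy := hdual x hxmem
      rw [eucl_inner] at hxy
      have hval : ∑ i, x i * y i = k := by
        simp_rw [hxapp, sub_mul, Finset.sum_sub_distrib]
        have e1 : ∑ i, (if 0 < y i then (1:ℝ) else 0) * y i = k := by
          refine Finset.sum_congr rfl fun i _ => ?_
          rcases le_or_gt (y i) 0 with h' | h'
          · rw [if_neg (not_lt.mpr h'), max_eq_right h', zero_mul]
          · rw [if_pos h', max_eq_left h'.le, one_mul]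
        have e2 : ∑ i, a/(d+1) * y i = 0 := by
          rw [← Finset.mul_sum, hsum, mul_zero]
        rw [e1, e2, sub_zero]
      linarith [hval ▸ hxy]
    -- build the two simplex points
    set c : ℝ := (1-k)/(d+1) with hc
    have hc0 : 0 ≤ c := div_nonneg (by linarith) (by positivity)
    set p : EuclideanSpace ℝ (Fin (d+1)) := (WithLp.equiv 2 (Fin (d+1) → ℝ)).symm
      (fun i => max (y i) 0 + c) with hpdef
    set q : EuclideanSpace ℝ (Fin (d+1)) := (WithLp.equiv 2 (Fin (d+1) → ℝ)).symm
      (fun i => max (-y i) 0 + c) with hqdef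
    have hpapp : ∀ i, p i = max (y i) 0 + c := fun i => rfl
    have hqapp : ∀ i, q i = max (-y i) 0 + c := fun i => rfl
    have hsum_const : ∑ _i : Fin (d+1), c = (1-k) := by
      rw [Finset.sum_const, Finset.card_univ, Fintype.card_fin, nsmul_eq_mul, hc]
      push_cast
      field_simp
    have hp : (∀ i, 0 ≤ p i) ∧ ∑ i, p i = 1 := by
      constructor
      · intro i; rw [hpapp]; exact add_nonneg (le_max_right _ _) hc0
      · simp_rw [hpapp, Finset.sum_add_distrib, hsum_const, ← hk]; ring
    have hq : (∀ i, 0 ≤ q i) ∧ ∑ i, q i = 1 := by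
      constructor
      · intro i; rw [hqapp]; exact add_nonneg (le_max_right _ _) hc0
      · simp_rw [hqapp, Finset.sum_add_distrib, hneg, hsum_const]; ring
    have hy : y = p + (-q) := by
      ext i
      rw [PiLp.add_apply, PiLp.neg_apply, hpapp, hqapp]
      rcases le_or_gt (y i) 0 with h' | h'
      · rw [max_eq_right h', max_eq_left (by linarith)]; ring
      · rw [max_eq_left h'.le, max_eq_right (by linarith)]; ring
    rw [hy]
    exact Set.add_mem_add hp (Set.neg_mem_neg.mpr hq)
  · intro hy
    obtain ⟨p, hp, nq, hnq, rfl⟩ := Set.mem_add.mp hy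
    obtain ⟨hq0, hq1⟩ := Set.mem_neg.mp hnq
    obtain ⟨hp0, hp1⟩ := hp
    have hnq_app : ∀ i, nq i = -((-nq) i) := fun i => by rw [PiLp.neg_apply]; ring
    have hnqsum : ∑ i, nq i = -1 := by
      rw [Finset.sum_congr rfl fun i _ => hnq_app i, Finset.sum_neg_distrib, hq1]
    constructor
    · have : ∀ i, (p + nq) i = p i + nq i := fun i => rfl
      rw [Finset.sum_congr rfl fun i _ => this i, Finset.sum_add_distrib, hp1, hnqsum]
      ring
    · intro x hx
      rw [vorCellA_eq] at hx
      obtain ⟨-, hxp⟩ := hx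
      obtain ⟨i0, -, hi0⟩ := Finset.exists_max_image Finset.univ (fun i => x i)
        ⟨0, Finset.mem_univ 0⟩
      obtain ⟨j0, -, hj0⟩ := Finset.exists_min_image Finset.univ (fun i => x i)
        ⟨0, Finset.mem_univ 0⟩
      rw [eucl_inner]
      have e : ∀ i, x i * (p + nq) i = x i * p i - x i * ((-nq) i) := by
        intro i; rw [PiLp.add_apply, PiLp.neg_apply]; ring
      rw [Finset.sum_congr rfl fun i _ => e i, Finset.sum_sub_distrib]
      have b1 : ∑ i, x i * p i ≤ x i0 := by
        calc ∑ i, x i * p i ≤ ∑ i, x i0 * p i :=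
              Finset.sum_le_sum fun i _ =>
                mul_le_mul_of_nonneg_right (hi0 i (Finset.mem_univ i)) (hp0 i)
          _ = x i0 := by rw [← Finset.mul_sum, hp1, mul_one]
      have b2 : x j0 ≤ ∑ i, x i * ((-nq) i) := by
        calc x j0 = ∑ i, x j0 * ((-nq) i) := by rw [← Finset.mul_sum, hq1, mul_one]
          _ ≤ ∑ i, x i * ((-nq) i) :=
              Finset.sum_le_sum fun i _ =>
                mul_le_mul_of_nonneg_right (hj0 i (Finset.mem_univ i)) (hq0 i)
      linarith [hxp i0 j0]

/-- The dual polytope of the Voronoi cell of the root lattice `A_d`, taken within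
the hyperplane `{x : Σ x_i = 0}`, equals `S + (−S)` where `S` is the standard
simplex; consequently `xc(VC(A_d)) ≤ 2(d+1)`. -/
theorem dual_voronoi_A_eq_diff_of_simplices (d : ℕ) :
    {y : EuclideanSpace ℝ (Fin (d + 1)) |
        (∑ i, y i = 0) ∧ ∀ x ∈ vorCellA d, ⟪x, y⟫ ≤ 1} =
      stdSimplex' d + -stdSimplex' d ∧
    xc (vorCellA d) ≤ 2 * (d + 1) := by
  exact ⟨dual_eq d, xc_vor_le d⟩
end

section
/- Every totally unimodular d × r matrix whose columns are pairwise distinct, nonzero, and no column is the negative of another, satisfies r ≤ d(d+1)/2. -/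
/-- A real matrix is totally unimodular if every square submatrix has determinant
in `{−1, 0, 1}`. -/
def TotallyUnimodular {d r : ℕ} (A : Matrix (Fin d) (Fin r) ℝ) : Prop :=
  ∀ (k : ℕ) (f : Fin k → Fin d) (g : Fin k → Fin r),
    (A.submatrix f g).det = -1 ∨ (A.submatrix f g).det = 0 ∨ (A.submatrix f g).det = 1

lemma tu_entry {d r : ℕ} {A : Matrix (Fin d) (Fin r) ℝ} (h : TotallyUnimodular A)
    (i : Fin d) (j : Fin r) : A i j = -1 ∨ A i j = 0 ∨ A i j = 1 := by
  have := h 1 (fun _ => i) (fun _ => j)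
  simpa [Matrix.det_fin_one] using this

lemma tu_2x2 {d r : ℕ} {A : Matrix (Fin d) (Fin r) ℝ} (h : TotallyUnimodular A)
    (i i' : Fin d) (j j' : Fin r) :
    A i j * A i' j' - A i j' * A i' j = -1 ∨ A i j * A i' j' - A i j' * A i' j = 0 ∨
      A i j * A i' j' - A i j' * A i' j = 1 := by
  have := h 2 ![i, i'] ![j, j']
  rw [Matrix.det_fin_two] at this
  simpa using this

lemma tu_signs {d r d' r' : ℕ} {A : Matrix (Fin d) (Fin r) ℝ} (h : TotallyUnimodular A)
    (f0 : Fin d' → Fin d) (g0 : Fin r' → Fin r) (ε : Fin r' → ℝ)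
    (hε : ∀ j, ε j = 1 ∨ ε j = -1) :
    TotallyUnimodular (Matrix.of fun i j => ε j * A (f0 i) (g0 j)) := by
  intro k f g
  have hdet : ((Matrix.of fun i j => ε j * A (f0 i) (g0 j)).submatrix f g).det
      = (∏ q, ε (g q)) * (A.submatrix (f0 ∘ f) (g0 ∘ g)).det := by
    rw [← Matrix.det_mul_row]
    rfl
  have hprod : (∏ q, ε (g q)) = 1 ∨ (∏ q, ε (g q)) = -1 := by
    refine Finset.prod_induction _ (fun x => x = 1 ∨ x = -1) ?_ (Or.inl rfl) ?_
    · rintro x y (hx | hx) (hy | hy) <;> simp [hx, hy]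
    · intro q _; exact hε (g q)
  have := h k (f0 ∘ f) (g0 ∘ g)
  rcases hprod with hp | hp <;> rw [hdet, hp] <;>
    rcases this with h1 | h1 | h1 <;> rw [h1] <;> norm_num

open Matrix in
lemma exists_rows_isUnit {p m : ℕ} {w : Fin p → Fin m → ℝ}
    (hw : LinearIndependent ℝ w) :
    ∃ R : Fin p → Fin m, IsUnit (Matrix.of fun i q => w q (R i)) := by
  classical
  set N : Matrix (Fin p) (Fin m) ℝ := Matrix.of w with hN
  have hrank : N.rank = p := by
    have := LinearIndependent.rank_matrix (M := N) hw
    simpa using this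
  have h3 : Module.finrank ℝ (Submodule.span ℝ (Set.range Nᵀ)) = p := by
    change Module.finrank ℝ (Submodule.span ℝ (Set.range (Nᵀ).row)) = p
    rw [← Matrix.rank_eq_finrank_span_row, Matrix.rank_transpose]; exact hrank
  obtain ⟨b, hbsub, hbspan, hbind⟩ := exists_linearIndependent ℝ (Set.range Nᵀ)
  have hbfin : b.Finite := hbind.setFinite
  haveI : Fintype b := hbfin.fintype
  have hcard : b.toFinset.card = p := by
    have := finrank_span_set_eq_card (s := b) hbind
    rw [hbspan, h3] at this
    exact this.symm
  have e0 : b.toFinset ≃ Fin p := (b.toFinset.equivFin).trans (finCongr hcard)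
  set e := e0.symm with he
  have hmem : ∀ k : Fin p, ((e k : Fin p → ℝ)) ∈ Set.range Nᵀ := fun k =>
    hbsub (Set.mem_toFinset.mp (e k).2)
  choose R hR using fun k => hmem k
  refine ⟨R, ?_⟩
  have hrows : ∀ k, (Matrix.of fun i q => w q (R i)) k = ((e k : Fin p → ℝ)) := by
    intro k
    funext q
    have := congrFun (hR k) q
    simpa [N] using this
  rw [← Matrix.linearIndependent_rows_iff_isUnit]
  have : (fun k => (Matrix.of fun i q => w q (R i)) k) = fun k => ((e k : Fin p → ℝ)) := by
    funext k; exact hrows k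
  change LinearIndependent ℝ (fun k => (Matrix.of fun i q => w q (R i)) k)
  rw [this]
  have hinj : Function.Injective
      (fun k : Fin p => (⟨(e k : Fin p → ℝ), Set.mem_toFinset.mp (e k).2⟩ : b)) := by
    intro x y hxy
    apply e.injective
    ext1
    simpa using congrArg Subtype.val hxy
  exact hbind.comp _ hinj

lemma indep_doubled {m r k : ℕ} {A : Matrix (Fin (m+1)) (Fin r) ℝ}
    (hTU : TotallyUnimodular A) (a b : Fin k → Fin r) (η ζ : Fin k → ℝ)
    (hη : ∀ j, η j = 1 ∨ η j = -1)
    (hζ : ∀ j, ζ j = 1 ∨ ζ j = -1)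
    (ha0 : ∀ j, A 0 (a j) = 0)
    (hb0 : ∀ j, A 0 (b j) = η j)
    (hab : ∀ j i, A (Fin.succ i) (b j) = ζ j * A (Fin.succ i) (a j))
    (hpair : ∀ j j', j ≠ j' →
      ¬((fun i => A (Fin.succ i) (a j)) = (fun i => A (Fin.succ i) (a j')) ∨
        (fun i => A (Fin.succ i) (a j)) = -(fun i => A (Fin.succ i) (a j'))))
    (hanz : ∀ j, (fun i => A (Fin.succ i) (a j)) ≠ 0) :
    LinearIndependent ℝ (fun j => (fun i : Fin m => A (Fin.succ i) (a j))) := by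
  classical
  set u : Fin k → Fin m → ℝ := fun j i => A (Fin.succ i) (a j) with hu
  by_contra hind
  rw [Fintype.not_linearIndependent_iff] at hind
  obtain ⟨g0, hg0sum, i0, hg0i⟩ := hind
  set P : ℕ → Prop := fun n => ∃ g : Fin k → ℝ, (∑ j, g j • u j = 0) ∧ (∃ j, g j ≠ 0) ∧
    (Finset.univ.filter (fun j => g j ≠ 0)).card = n with hP
  have hPex : ∃ n, P n := ⟨_, g0, hg0sum, ⟨i0, hg0i⟩, rfl⟩
  obtain ⟨g, hgsum, hgex, hgcard⟩ := Nat.find_spec hPex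
  set n₀ := Nat.find hPex with hn₀
  set s : Finset (Fin k) := Finset.univ.filter (fun j => g j ≠ 0) with hs
  have hgs : ∀ j ∈ s, g j ≠ 0 := fun j hj => (Finset.mem_filter.mp hj).2
  have hgns : ∀ j, j ∉ s → g j = 0 := by
    intro j hj
    by_contra hc
    exact hj (Finset.mem_filter.mpr ⟨Finset.mem_univ _, hc⟩)
  have claim_min : ∀ h : Fin k → ℝ, (∑ j, h j • u j = 0) → (∀ j, j ∉ s → h j = 0) →
      (∃ j ∈ s, h j = 0) → ∀ j, h j = 0 := by
    intro h hsum hsupp ⟨j₂, hj₂s, hj₂⟩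
    by_contra hne
    push_neg at hne
    have hsub : Finset.univ.filter (fun j => h j ≠ 0) ⊆ s.erase j₂ := by
      intro x hx
      have hx' : h x ≠ 0 := (Finset.mem_filter.mp hx).2
      refine Finset.mem_erase.mpr ⟨?_, ?_⟩
      · rintro rfl; exact hx' hj₂
      · by_contra hxs; exact hx' (hsupp x hxs)
    have hlt : (Finset.univ.filter (fun j => h j ≠ 0)).card < n₀ := by
      calc (Finset.univ.filter (fun j => h j ≠ 0)).card ≤ (s.erase j₂).card :=
            Finset.card_le_card hsub
        _ < s.card := Finset.card_erase_lt_of_mem hj₂s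
        _ = n₀ := hgcard
    exact Nat.find_min hPex hlt ⟨h, hsum, hne, rfl⟩
  have hsum_s : ∑ j ∈ s, g j • u j = 0 := by
    rw [Finset.sum_subset (Finset.subset_univ s) (fun x _ hx => by rw [hgns x hx, zero_smul])]
    exact hgsum
  have hsnon : s.Nonempty := by
    obtain ⟨j, hj⟩ := hgex
    exact ⟨j, Finset.mem_filter.mpr ⟨Finset.mem_univ _, hj⟩⟩
  -- case on the size of s
  rcases lt_or_ge s.card 3 with hlt3 | hge3
  · -- small cases
    interval_cases hsc : s.card
    · rw [Finset.card_eq_zero] at hsc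
      exact absurd hsc (Finset.nonempty_iff_ne_empty.mp hsnon)
    · -- one nonzero coefficient: a column is zero
      obtain ⟨j₁, hj1⟩ := Finset.card_eq_one.mp hsc
      have : ∑ j ∈ s, g j • u j = g j₁ • u j₁ := by rw [hj1, Finset.sum_singleton]
      rw [this] at hsum_s
      have hj1s : j₁ ∈ s := by rw [hj1]; exact Finset.mem_singleton_self _
      rcases smul_eq_zero.mp hsum_s with hg1 | hu1
      · exact hgs j₁ hj1s hg1
      · exact hanz j₁ hu1
    · -- two nonzero coefficients: two columns are proportional
      obtain ⟨j₁, j₂, hne, hs2⟩ := Finset.card_eq_two.mp hsc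
      have hsum2 : g j₁ • u j₁ + g j₂ • u j₂ = 0 := by
        rw [hs2, Finset.sum_pair hne] at hsum_s; exact hsum_s
      have hj1s : j₁ ∈ s := by rw [hs2]; simp
      have hj2s : j₂ ∈ s := by rw [hs2]; simp
      have hg1 := hgs j₁ hj1s
      have hg2 := hgs j₂ hj2s
      have hrow : ∀ x, g j₁ * u j₁ x + g j₂ * u j₂ x = 0 := by
        intro x
        have := congrFun hsum2 x
        simpa using this
      obtain ⟨x, hx⟩ := Function.ne_iff.mp (hanz j₁)
      have hx1 : u j₁ x ≠ 0 := by simpa using hx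
      have hx2 : u j₂ x ≠ 0 := by
        intro h0
        have := hrow x
        rw [h0, mul_zero, add_zero, mul_eq_zero] at this
        tauto
      have hval1 := tu_entry hTU (Fin.succ x) (a j₁)
      have hval2 := tu_entry hTU (Fin.succ x) (a j₂)
      have hcases : u j₁ x = u j₂ x ∨ u j₁ x = -u j₂ x := by
        have e1 : A (Fin.succ x) (a j₁) = u j₁ x := rfl
        have e2 : A (Fin.succ x) (a j₂) = u j₂ x := rfl
        rw [e1] at hval1; rw [e2] at hval2
        rcases hval1 with h1 | h1 | h1 <;> rcases hval2 with h2 | h2 | h2 <;>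
          simp [h1, h2] at hx1 hx2 ⊢ <;> norm_num
      rcases hcases with hc | hc
      · have hg21 : g j₂ = -g j₁ := by
          have := hrow x
          rw [hc] at this
          have h2 : (g j₁ + g j₂) * u j₂ x = 0 := by ring_nf; linarith [this]
          rcases mul_eq_zero.mp h2 with h3 | h3
          · linarith
          · exact absurd h3 hx2
        refine hpair j₁ j₂ hne (Or.inl ?_)
        funext y
        have := hrow y
        rw [hg21] at this
        have : g j₁ * (u j₁ y - u j₂ y) = 0 := by ring_nf; linarith [this]
        rcases mul_eq_zero.mp this with h3 | h3
        · exact absurd h3 hg1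
        · show u j₁ y = u j₂ y
          linarith
      · have hg21 : g j₂ = g j₁ := by
          have := hrow x
          rw [hc] at this
          have h2 : (g j₂ - g j₁) * u j₂ x = 0 := by ring_nf; linarith [this]
          rcases mul_eq_zero.mp h2 with h3 | h3
          · linarith
          · exact absurd h3 hx2
        refine hpair j₁ j₂ hne (Or.inr ?_)
        funext y
        have := hrow y
        rw [hg21] at this
        have : g j₁ * (u j₁ y + u j₂ y) = 0 := by ring_nf; linarith [this]
        rcases mul_eq_zero.mp this with h3 | h3
        · exact absurd h3 hg1
        · show u j₁ y = -u j₂ y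
          linarith
  · -- main case: at least 3 nonzero coefficients
    obtain ⟨nm, hnm⟩ : ∃ nm, s.card = nm + 1 := ⟨s.card - 1, by omega⟩
    have hnm2 : 2 ≤ nm := by omega
    set e0 : Fin (nm + 1) ≃ s := ((s.equivFin).trans (finCongr hnm)).symm with he0
    set σ : Fin (nm + 1) → Fin k := fun q => (e0 q).val with hσ
    have hσs : ∀ q, σ q ∈ s := fun q => (e0 q).2
    have hσsymm : ∀ q (h : σ q ∈ s), e0.symm ⟨σ q, h⟩ = q := by
      intro q h
      have : (⟨σ q, h⟩ : {x // x ∈ s}) = e0 q := Subtype.ext rfl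
      rw [this, Equiv.symm_apply_apply]
    set g' : Fin (nm + 1) → ℝ := fun q => g (σ q) with hg'
    set u' : Fin (nm + 1) → Fin m → ℝ := fun q => u (σ q) with hu'
    have hg'ne : ∀ q, g' q ≠ 0 := fun q => hgs _ (hσs q)
    have hsum_equiv : ∀ F : Fin k → Fin m → ℝ,
        ∑ q, F (σ q) = ∑ j ∈ s, F j := by
      intro F
      rw [← Finset.sum_coe_sort s F]
      exact Equiv.sum_comp e0 (fun x => F x.val)
    have hrel : ∑ q, g' q • u' q = 0 := by
      have := hsum_equiv (fun j => g j • u j)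
      simp only [hg', hu']
      calc ∑ q, g (σ q) • u (σ q) = ∑ j ∈ s, g j • u j := this
        _ = 0 := hsum_s
    -- the family u' restricted away from index 0 is linearly independent
    have hw : LinearIndependent ℝ (fun p : Fin nm => u' p.succ) := by
      rw [Fintype.linearIndependent_iff]
      intro hc hcsum
      set h : Fin k → ℝ := fun j =>
        if hjs : j ∈ s then (Fin.cases 0 hc (e0.symm ⟨j, hjs⟩) : ℝ) else 0 with hh
      have hσval : ∀ q, h (σ q) = Fin.cases 0 hc q := by
        intro q
        simp only [hh, dif_pos (hσs q), hσsymm q (hσs q)]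
      have hsumh : ∑ j, h j • u j = 0 := by
        have h1 : ∑ j ∈ s, h j • u j = ∑ j, h j • u j :=
          Finset.sum_subset (Finset.subset_univ s)
            (fun x _ hx => by rw [hh]; simp [dif_neg hx])
        rw [← h1, ← hsum_equiv (fun j => h j • u j)]
        have : ∀ q, h (σ q) • u (σ q) = (Fin.cases 0 hc q : ℝ) • u' q := by
          intro q; rw [hσval q]
        rw [Finset.sum_congr rfl (fun q _ => this q)]
        rw [Fin.sum_univ_succ]
        simpa using hcsum
      have hz := claim_min h hsumh (fun j hj => by rw [hh]; simp [dif_neg hj])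
        ⟨σ 0, hσs 0, by rw [hσval]; rfl⟩
      intro p
      have := hz (σ p.succ)
      rw [hσval] at this
      simpa using this
    obtain ⟨R, hRunit⟩ := exists_rows_isUnit hw
    set V : Matrix (Fin nm) (Fin (nm + 1)) ℝ := Matrix.of fun i q => u' q (R i) with hV
    set c : Fin (nm + 1) → ℝ := fun q => (-1) ^ (q : ℕ) * (V.submatrix id q.succAbove).det
      with hc
    have hf1 : ∀ tv : Fin (nm + 1) → ℝ,
        (Matrix.of (Fin.cases tv (fun i => V i)) : Matrix (Fin (nm + 1)) (Fin (nm + 1)) ℝ).det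
          = ∑ q, tv q * c q := by
      intro tv
      rw [Matrix.det_succ_row_zero]
      refine Finset.sum_congr rfl fun q _ => ?_
      have hsub : (Matrix.of (Fin.cases tv (fun i => V i)) :
          Matrix (Fin (nm + 1)) (Fin (nm + 1)) ℝ).submatrix Fin.succ q.succAbove
          = V.submatrix id q.succAbove := by
        ext i p
        simp [Matrix.submatrix_apply]
      rw [hsub]
      have h0q : (Matrix.of (Fin.cases tv (fun i => V i)) :
          Matrix (Fin (nm + 1)) (Fin (nm + 1)) ℝ) 0 q = tv q := rfl
      rw [h0q, hc]
      ring
    have hc0 : c 0 ≠ 0 := by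
      have hSq : V.submatrix id (Fin.succAbove 0) = Matrix.of fun i p => u' p.succ (R i) := by
        ext i p
        show V i (Fin.succAbove 0 p) = u' p.succ (R i)
        have h2 : Fin.succAbove 0 p = p.succ := by rw [Fin.succAbove_zero]
        rw [h2]
        rfl
      have hceq : c 0 = (Matrix.of fun i p => u' p.succ (R i) :
          Matrix (Fin nm) (Fin nm) ℝ).det := by
        show (-1 : ℝ) ^ ((0 : Fin (nm + 1)) : ℕ)
            * (V.submatrix id (Fin.succAbove (0 : Fin (nm + 1)))).det = _
        rw [hSq]
        norm_num
      rw [hceq]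
      exact fun h0 => (isUnit_iff_ne_zero.mp ((Matrix.isUnit_iff_isUnit_det _).mp hRunit)) h0
    have hrowrel : ∀ i : Fin nm, ∑ q, V i q * c q = 0 := by
      intro i
      have h1 := hf1 (V i)
      have hzero : (Matrix.of (Fin.cases (V i) (fun i2 => V i2)) :
          Matrix (Fin (nm + 1)) (Fin (nm + 1)) ℝ).det = 0 := by
        refine Matrix.det_zero_of_row_eq (i := 0) (j := i.succ) (Fin.succ_ne_zero i).symm ?_
        funext q
        simp
      rw [hzero] at h1
      exact h1.symm
    have hgrow : ∀ i : Fin nm, ∑ q, V i q * g' q = 0 := by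
      intro i
      have := congrFun hrel (R i)
      simp only [Finset.sum_apply, Pi.smul_apply, smul_eq_mul, Pi.zero_apply] at this
      calc ∑ q, V i q * g' q = ∑ q, g' q * u' q (R i) := by
            refine Finset.sum_congr rfl fun q _ => ?_
            rw [hV]; simp [mul_comm]
        _ = 0 := this
    have hker : ∀ q, g' 0 * c q - c 0 * g' q = 0 := by
      set h' : Fin (nm + 1) → ℝ := fun q => g' 0 * c q - c 0 * g' q with hh'
      have h'0 : h' 0 = 0 := by rw [hh']; ring
      have hrow0 : ∀ i, ∑ q, V i q * h' q = 0 := by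
        intro i
        have hexp : ∑ q, V i q * h' q
            = g' 0 * (∑ q, V i q * c q) - c 0 * (∑ q, V i q * g' q) := by
          rw [Finset.mul_sum, Finset.mul_sum, ← Finset.sum_sub_distrib]
          exact Finset.sum_congr rfl fun q _ => by rw [hh']; ring
        rw [hexp, hrowrel i, hgrow i]
        ring
      have hmv : (Matrix.of fun i p => u' p.succ (R i) : Matrix (Fin nm) (Fin nm) ℝ).mulVec
          (fun p : Fin nm => h' p.succ) = 0 := by
        funext i
        have h2 := hrow0 i
        rw [Fin.sum_univ_succ, h'0, mul_zero, zero_add] at h2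
        simpa [Matrix.mulVec, dotProduct, hV] using h2
      have hinj := Matrix.mulVec_injective_iff_isUnit.mpr hRunit
      have hzz : (fun p : Fin nm => h' p.succ) = 0 := by
        apply hinj
        rw [hmv, Matrix.mulVec_zero]
      intro q
      refine Fin.cases ?_ ?_ q
      · exact h'0
      · intro p; exact congrFun hzz p
    have hcne : ∀ q, c q ≠ 0 := by
      intro q h0
      have := hker q
      rw [h0, mul_zero, zero_sub, neg_eq_zero, mul_eq_zero] at this
      rcases this with h1 | h1
      · exact hc0 h1
      · exact hg'ne q h1
    have hcval : ∀ q, c q = 1 ∨ c q = -1 := by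
      intro q
      have hTUdet := hTU nm (fun i => Fin.succ (R i)) (fun p => a (σ (q.succAbove p)))
      have hdeq : (V.submatrix id q.succAbove).det
          = (A.submatrix (fun i => Fin.succ (R i)) (fun p => a (σ (q.succAbove p)))).det := by
        congr 1
      have hsgn : ((-1 : ℝ)) ^ (q : ℕ) = 1 ∨ ((-1 : ℝ)) ^ (q : ℕ) = -1 := by
        rcases Nat.even_or_odd (q : ℕ) with he | ho
        · exact Or.inl he.neg_one_pow
        · exact Or.inr ho.neg_one_pow
      have hthis : (-1 : ℝ) ^ (q : ℕ) * (V.submatrix id q.succAbove).det ≠ 0 := hcne q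
      have hgoal : c q = (-1 : ℝ) ^ (q : ℕ) * (V.submatrix id q.succAbove).det := rfl
      rw [hgoal, hdeq]
      rw [hdeq] at hthis
      rcases hTUdet with h2 | h2 | h2
      · rw [h2]; rcases hsgn with h1 | h1 <;> rw [h1] <;> norm_num
      · exfalso; apply hthis; rw [h2]; ring
      · rw [h2]; rcases hsgn with h1 | h1 <;> rw [h1] <;> norm_num
    -- pigeonhole
    set φ : Fin (nm + 1) → ℝ := fun q => ζ (σ q) * η (σ q) * c q with hφdef
    have hφ : ∀ q, φ q = 1 ∨ φ q = -1 := by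
      intro q
      rcases hζ (σ q) with h1 | h1 <;> rcases hη (σ q) with h2 | h2 <;>
        rcases hcval q with h3 | h3 <;> rw [hφdef] <;> simp [h1, h2, h3]
    have hpig : ∃ q1 q2 : Fin (nm + 1), q1 ≠ q2 ∧ φ q1 = φ q2 := by
      have hcard : Fintype.card Bool < Fintype.card (Fin (nm + 1)) := by
        simp only [Fintype.card_bool, Fintype.card_fin]
        omega
      obtain ⟨q1, q2, hne, heq⟩ :=
        Fintype.exists_ne_map_eq_of_card_lt (fun q => decide (φ q = 1)) hcard
      refine ⟨q1, q2, hne, ?_⟩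
      rcases hφ q1 with h1 | h1 <;> rcases hφ q2 with h2 | h2 <;> rw [h1, h2] <;>
        simp [h1, h2] at heq ⊢ <;> norm_num at heq
    obtain ⟨q1, q2, hq12, hφeq⟩ := hpig
    -- the final ±2 submatrix
    set ε' : Fin (nm + 1) → ℝ := fun q => if q = q1 ∨ q = q2 then ζ (σ q) else 1 with hε'
    set gc : Fin (nm + 1) → Fin r := fun q => if q = q1 ∨ q = q2 then b (σ q) else a (σ q)
      with hgc
    have hε'pm : ∀ q, ε' q = 1 ∨ ε' q = -1 := by
      intro q
      rw [hε']
      by_cases h : q = q1 ∨ q = q2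
      · simp only [if_pos h]; exact hζ (σ q)
      · simp [if_neg h]
    have hTUB := tu_signs hTU (id : Fin (m + 1) → Fin (m + 1)) gc ε' hε'pm
    set f' : Fin (nm + 1) → Fin (m + 1) := Fin.cases 0 (fun i => Fin.succ (R i)) with hf'
    have hTUfin := hTUB (nm + 1) f' id
    set tv : Fin (nm + 1) → ℝ := fun q => if q = q1 ∨ q = q2 then ζ (σ q) * η (σ q) else 0
      with htv
    have hMeq : (Matrix.of fun i j => ε' j * A (id i) (gc j)).submatrix f' id
        = Matrix.of (Fin.cases tv (fun i => V i)) := by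
      ext i q
      refine Fin.cases ?_ ?_ i
      · have hf0 : f' 0 = 0 := by simp [hf']
        show ε' q * A (f' 0) (gc q) = tv q
        rw [hf0]
        by_cases h : q = q1 ∨ q = q2
        · simp only [hε', hgc, htv, if_pos h]
          rw [hb0]
        · simp only [hε', hgc, htv, if_neg h, one_mul]
          exact ha0 _
      · intro i2
        show ε' q * A (f' i2.succ) (gc q) = V i2 q
        have hf's : f' i2.succ = Fin.succ (R i2) := by simp [hf']
        rw [hf's]
        by_cases h : q = q1 ∨ q = q2
        · simp only [hε', hgc, if_pos h]
          rw [hab (σ q) (R i2)]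
          have hVq : V i2 q = A (Fin.succ (R i2)) (a (σ q)) := rfl
          rw [hVq]
          rcases hζ (σ q) with h1 | h1 <;> rw [h1] <;> ring
        · simp only [hε', hgc, if_neg h, one_mul]
          rfl
    have hdetval : ((Matrix.of fun i j => ε' j * A (id i) (gc j)).submatrix f' id).det
        = φ q1 + φ q2 := by
      rw [hMeq, hf1 tv]
      have hz : ∀ q ∈ Finset.univ, q ∉ ({q1, q2} : Finset (Fin (nm + 1))) → tv q * c q = 0 := by
        intro q _ hq
        simp only [Finset.mem_insert, Finset.mem_singleton] at hq
        push_neg at hq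
        show (if q = q1 ∨ q = q2 then ζ (σ q) * η (σ q) else 0) * c q = 0
        rw [if_neg (by tauto)]
        ring
      rw [← Finset.sum_subset (Finset.subset_univ ({q1, q2} : Finset (Fin (nm + 1)))) hz]
      rw [Finset.sum_pair hq12]
      have ht1 : tv q1 = ζ (σ q1) * η (σ q1) := by
        show (if q1 = q1 ∨ q1 = q2 then ζ (σ q1) * η (σ q1) else 0) = _
        rw [if_pos (Or.inl rfl)]
      have ht2 : tv q2 = ζ (σ q2) * η (σ q2) := by
        show (if q2 = q1 ∨ q2 = q2 then ζ (σ q2) * η (σ q2) else 0) = _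
        rw [if_pos (Or.inr rfl)]
      have hp1 : φ q1 = ζ (σ q1) * η (σ q1) * c q1 := rfl
      have hp2 : φ q2 = ζ (σ q2) * η (σ q2) * c q2 := rfl
      rw [ht1, ht2, hp1, hp2]
    rw [hdetval] at hTUfin
    rcases hφ q1 with h1 | h1 <;> rw [h1, ← hφeq, h1] at hTUfin <;>
      rcases hTUfin with h2 | h2 | h2 <;> norm_num at h2

lemma pair_struct {m r : ℕ} {A : Matrix (Fin (m + 1)) (Fin r) ℝ} (hTU : TotallyUnimodular A)
    (j j' : Fin r)
    (hdist : (fun i => A i j) ≠ (fun i => A i j'))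
    (hopp : (fun i => A i j) ≠ -(fun i => A i j'))
    (hpp : (∀ i : Fin m, A i.succ j = A i.succ j') ∨ (∀ i : Fin m, A i.succ j = -A i.succ j'))
    (hx : ∃ x : Fin m, A x.succ j ≠ 0) :
    (A 0 j = 0 ∧ A 0 j' ≠ 0) ∨ (A 0 j ≠ 0 ∧ A 0 j' = 0) := by
  obtain ⟨x, hx⟩ := hx
  have ht := tu_entry hTU x.succ j
  have h2 := tu_2x2 hTU 0 x.succ j j'
  have e1 := tu_entry hTU 0 j
  have e2 := tu_entry hTU 0 j'
  rcases hpp with hp | hp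
  · have hne0 : A 0 j ≠ A 0 j' := by
      intro he
      apply hdist
      funext i2
      refine Fin.cases ?_ ?_ i2
      · exact he
      · intro i3; exact hp i3
    by_cases hz1 : A 0 j = 0
    · refine Or.inl ⟨hz1, ?_⟩
      intro hz2
      exact hne0 (hz1.trans hz2.symm)
    · refine Or.inr ⟨hz1, ?_⟩
      by_contra hz2
      have hAx : A x.succ j' = A x.succ j := (hp x).symm
      rw [hAx] at h2
      rcases ht with t | t | t
      · rcases e1 with f1 | f1 | f1 <;> rcases e2 with f2 | f2 | f2 <;>
          (revert hz1 hz2 hne0 h2; norm_num [f1, f2, t])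
      · exact hx t
      · rcases e1 with f1 | f1 | f1 <;> rcases e2 with f2 | f2 | f2 <;>
          (revert hz1 hz2 hne0 h2; norm_num [f1, f2, t])
  · have hne0 : A 0 j ≠ -A 0 j' := by
      intro he
      apply hopp
      funext i2
      refine Fin.cases ?_ ?_ i2
      · exact he
      · intro i3
        show A i3.succ j = -(A i3.succ j')
        rw [hp i3]
    by_cases hz1 : A 0 j = 0
    · refine Or.inl ⟨hz1, ?_⟩
      intro hz2
      exact hne0 (by rw [hz1, hz2, neg_zero])
    · refine Or.inr ⟨hz1, ?_⟩
      by_contra hz2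
      have hAx : A x.succ j' = -A x.succ j := by
        have := hp x
        linarith [this]
      rw [hAx] at h2
      rcases ht with t | t | t
      · rcases e1 with f1 | f1 | f1 <;> rcases e2 with f2 | f2 | f2 <;>
          (revert hz1 hz2 hne0 h2; norm_num [f1, f2, t])
      · exact hx t
      · rcases e1 with f1 | f1 | f1 <;> rcases e2 with f2 | f2 | f2 <;>
          (revert hz1 hz2 hne0 h2; norm_num [f1, f2, t])

theorem heller_aux : ∀ (d r : ℕ) (A : Matrix (Fin d) (Fin r) ℝ),
    TotallyUnimodular A →
    (∀ j, (fun i => A i j) ≠ 0) →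
    (∀ j j', j ≠ j' → (fun i => A i j) ≠ (fun i => A i j')) →
    (∀ j j', j ≠ j' → (fun i => A i j) ≠ -(fun i => A i j')) →
    r ≤ d * (d + 1) / 2 := by
  intro d
  induction d with
  | zero =>
    intro r A hTU hnz hdist hopp
    by_contra hcon
    push_neg at hcon
    have hr : 0 < r := by omega
    exact hnz ⟨0, hr⟩ (funext fun i => i.elim0)
  | succ m IH =>
    intro r A hTU hnz hdist hopp
    classical
    -- sign normalization function
    set N : (Fin m → ℝ) → (Fin m → ℝ) :=
      fun v => Classical.epsilon (fun w => w = v ∨ w = -v) with hN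
    have hN1 : ∀ v, N v = v ∨ N v = -v := fun v =>
      Classical.epsilon_spec (p := fun w => w = v ∨ w = -v) ⟨v, Or.inl rfl⟩
    have hNeq : ∀ v w, (v = w ∨ v = -w) → N v = N w := by
      intro v w hvw
      rcases hvw with rfl | rfl
      · rfl
      · show Classical.epsilon (fun x => x = -w ∨ x = -(-w)) = _
        congr 1
        funext x
        apply propext
        rw [neg_neg]
        exact or_comm
    have hN0 : ∀ v, N v = 0 → v = 0 := by
      intro v hv
      rcases hN1 v with e | e
      · rw [hv] at e; exact e.symm
      · rw [hv] at e; exact neg_eq_zero.mp e.symm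
    set proj : Fin r → (Fin m → ℝ) := fun j i => A (Fin.succ i) j with hproj
    set F : Fin r → (Fin m → ℝ) := fun j => N (proj j) with hF
    have hFproj : ∀ j, F j = proj j ∨ F j = -proj j := fun j => hN1 (proj j)
    have hFcl : ∀ j j', F j = F j' → (proj j = proj j' ∨ proj j = -proj j') := by
      intro j j' h
      rcases hFproj j with e1 | e1 <;> rcases hFproj j' with e2 | e2
      · left; rw [← e1, ← e2, h]
      · right; rw [← e1, h, e2]
      · right
        have h1 : proj j = -F j := by rw [e1, neg_neg]
        rw [h1, h, e2]
      · left
        have h1 : proj j = -F j := by rw [e1, neg_neg]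
        have h2 : proj j' = -F j' := by rw [e2, neg_neg]
        rw [h1, h2, h]
    -- fiberwise counting
    set T := Finset.image F Finset.univ with hT
    set fib : (Fin m → ℝ) → Finset (Fin r) :=
      fun v => Finset.univ.filter (fun j => F j = v) with hfib
    have hrsum : r = ∑ v ∈ T, (fib v).card := by
      have := Finset.card_eq_sum_card_fiberwise
        (f := F) (s := Finset.univ) (t := T)
        (fun j _ => Finset.mem_image_of_mem F (Finset.mem_univ j))
      simpa using this
    -- projections of columns in a nonzero fiber are nonzero
    have hprojnz : ∀ v, v ≠ 0 → ∀ j ∈ fib v, proj j ≠ 0 := by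
      intro v hv j hj hpj
      have hFj : F j = v := (Finset.mem_filter.mp hj).2
      apply hv
      rw [← hFj, hF]
      show N (proj j) = 0
      rw [hpj]
      rcases hN1 0 with e | e
      · exact e
      · rw [neg_zero] at e; exact e
    -- the zero fiber has at most one column
    have hfib0 : (fib 0).card ≤ 1 := by
      rw [Finset.card_le_one]
      intro j hj j' hj'
      by_contra hne
      have hpj : proj j = 0 := by
        have := (Finset.mem_filter.mp hj).2
        exact hN0 _ this
      have hpj' : proj j' = 0 := by
        have := (Finset.mem_filter.mp hj').2
        exact hN0 _ this
      have hA0j : A 0 j ≠ 0 := by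
        intro h0
        apply hnz j
        funext x
        refine Fin.cases ?_ ?_ x
        · exact h0
        · intro i; exact congrFun hpj i
      have hA0j' : A 0 j' ≠ 0 := by
        intro h0
        apply hnz j'
        funext x
        refine Fin.cases ?_ ?_ x
        · exact h0
        · intro i; exact congrFun hpj' i
      have hd : A 0 j ≠ A 0 j' := by
        intro he
        apply hdist j j' hne
        funext x
        refine Fin.cases ?_ ?_ x
        · exact he
        · intro i
          show proj j i = proj j' i
          rw [congrFun hpj i, congrFun hpj' i]
      have ho : A 0 j ≠ -A 0 j' := by
        intro he
        apply hopp j j' hne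
        funext x
        refine Fin.cases ?_ ?_ x
        · exact he
        · intro i
          show proj j i = -(proj j' i)
          rw [congrFun hpj i, congrFun hpj' i]
          simp
      rcases tu_entry hTU 0 j with f1 | f1 | f1 <;>
        rcases tu_entry hTU 0 j' with f2 | f2 | f2 <;>
        (revert hA0j hA0j' hd ho; norm_num [f1, f2])
    -- structure of pairs within a nonzero fiber
    have hps : ∀ v, v ≠ 0 → ∀ j ∈ fib v, ∀ j' ∈ fib v, j ≠ j' →
        (A 0 j = 0 ∧ A 0 j' ≠ 0) ∨ (A 0 j ≠ 0 ∧ A 0 j' = 0) := by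
      intro v hv j hj j' hj' hne
      have hFj : F j = F j' := by
        rw [(Finset.mem_filter.mp hj).2, (Finset.mem_filter.mp hj').2]
      have hcl := hFcl j j' hFj
      refine pair_struct hTU j j' (hdist j j' hne) (hopp j j' hne) ?_ ?_
      · rcases hcl with h | h
        · exact Or.inl (fun i => congrFun h i)
        · refine Or.inr (fun i => ?_)
          have := congrFun h i
          simpa using this
      · have := hprojnz v hv j hj
        obtain ⟨x, hx⟩ := Function.ne_iff.mp this
        exact ⟨x, by simpa using hx⟩
    -- each nonzero fiber has at most two columns
    have hfib2 : ∀ v, v ≠ 0 → (fib v).card ≤ 2 := by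
      intro v hv
      by_contra hcon
      push_neg at hcon
      obtain ⟨j1, j2, j3, h1, h2, h3, h12, h13, h23⟩ := Finset.two_lt_card_iff.mp hcon
      have p12 := hps v hv j1 h1 j2 h2 h12
      have p13 := hps v hv j1 h1 j3 h3 h13
      have p23 := hps v hv j2 h2 j3 h3 h23
      tauto
    -- nonzero classes give a TU matrix with m rows; apply IH
    set Tp := T.filter (fun v => ¬v = 0) with hTp
    have hIH : Tp.card ≤ m * (m + 1) / 2 := by
      set k1 := Tp.card with hk1
      set e1 : Fin k1 ≃ {x // x ∈ Tp} := Tp.equivFin.symm with he1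
      have hTmem : ∀ v : {x // x ∈ Tp}, ∃ j, F j = v.val := by
        intro v
        have := Finset.mem_of_mem_filter v.val v.2
        obtain ⟨j, _, hj⟩ := Finset.mem_image.mp this
        exact ⟨j, hj⟩
      choose rep hrep using hTmem
      set εc : {x // x ∈ Tp} → ℝ := fun v => if v.val = proj (rep v) then 1 else -1 with hεc
      have hεcol : ∀ (v : {x // x ∈ Tp}) (i : Fin m),
          (v.val : Fin m → ℝ) i = εc v * A (Fin.succ i) (rep v) := by
        intro v i
        by_cases h : v.val = proj (rep v)
        · have hec : εc v = 1 := by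
            show (if v.val = proj (rep v) then (1 : ℝ) else -1) = 1
            rw [if_pos h]
          rw [hec, one_mul]
          exact congrFun h i
        · have hec : εc v = -1 := by
            show (if v.val = proj (rep v) then (1 : ℝ) else -1) = -1
            rw [if_neg h]
          rw [hec]
          have := hFproj (rep v)
          rw [hrep v] at this
          rcases this with e | e
          · exact absurd e h
          · have := congrFun e i
            simpa using this
      set B : Matrix (Fin m) (Fin k1) ℝ :=
        Matrix.of fun i t => εc (e1 t) * A (Fin.succ i) (rep (e1 t)) with hB
      have hTUB : TotallyUnimodular B :=
        tu_signs hTU Fin.succ (fun t => rep (e1 t)) (fun t => εc (e1 t))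
          (fun t => by
            show (if (e1 t).val = proj (rep (e1 t)) then (1 : ℝ) else -1) = 1 ∨
              (if (e1 t).val = proj (rep (e1 t)) then (1 : ℝ) else -1) = -1
            split <;> simp)
      have hBv : ∀ t, (fun i => B i t) = ((e1 t).val : Fin m → ℝ) := by
        intro t
        funext i
        exact (hεcol (e1 t) i).symm
      have hvalne : ∀ t t', t ≠ t' → (e1 t).val ≠ (e1 t').val := by
        intro t t' htt he
        exact htt (e1.injective (Subtype.ext he))
      have hnzB : ∀ t, (fun i => B i t) ≠ 0 := by
        intro t h0
        rw [hBv t] at h0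
        have := (Finset.mem_filter.mp (e1 t).2).2
        exact this h0
      have hdistB : ∀ t t', t ≠ t' → (fun i => B i t) ≠ (fun i => B i t') := by
        intro t t' htt he
        rw [hBv t, hBv t'] at he
        exact hvalne t t' htt he
      have hNid : ∀ t : Fin k1, N ((e1 t).val) = (e1 t).val := by
        intro t
        have hmem := Finset.mem_of_mem_filter (e1 t).val (e1 t).2
        obtain ⟨j, _, hj⟩ := Finset.mem_image.mp hmem
        rw [← hj]
        exact hNeq _ _ (hN1 (proj j))
      have hoppB : ∀ t t', t ≠ t' → (fun i => B i t) ≠ -(fun i => B i t') := by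
        intro t t' htt he
        rw [hBv t, hBv t'] at he
        have : N ((e1 t).val) = N ((e1 t').val) := hNeq _ _ (Or.inr he)
        rw [hNid t, hNid t'] at this
        exact hvalne t t' htt this
      exact IH k1 B hTUB hnzB hdistB hoppB
    -- doubled classes: at most m of them
    set T2 := Tp.filter (fun v => 2 ≤ (fib v).card) with hT2
    have hD : T2.card ≤ m := by
      set k2 := T2.card with hk2
      set e2 : Fin k2 ≃ {x // x ∈ T2} := T2.equivFin.symm with he2
      have hvne : ∀ v : {x // x ∈ T2}, (v.val : Fin m → ℝ) ≠ 0 := by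
        intro v
        exact (Finset.mem_filter.mp (Finset.mem_of_mem_filter v.val v.2)).2
      have hdata : ∀ v : {x // x ∈ T2}, ∃ ab : Fin r × Fin r,
          F ab.1 = v.val ∧ F ab.2 = v.val ∧ ab.1 ≠ ab.2 ∧ A 0 ab.1 = 0 ∧ A 0 ab.2 ≠ 0 := by
        intro v
        have hc2 : 1 < (fib v.val).card := (Finset.mem_filter.mp v.2).2
        obtain ⟨j, hj, j', hj', hne⟩ := Finset.one_lt_card.mp hc2
        have hstruct := hps v.val (hvne v) j hj j' hj' hne
        rcases hstruct with ⟨hz, hnz'⟩ | ⟨hnz', hz⟩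
        · exact ⟨(j, j'), (Finset.mem_filter.mp hj).2, (Finset.mem_filter.mp hj').2, hne, hz, hnz'⟩
        · exact ⟨(j', j), (Finset.mem_filter.mp hj').2, (Finset.mem_filter.mp hj).2, hne.symm, hz, hnz'⟩
      choose ab hab1 hab2 hab3 hab4 hab5 using hdata
      set a : Fin k2 → Fin r := fun t => (ab (e2 t)).1 with ha
      set b : Fin k2 → Fin r := fun t => (ab (e2 t)).2 with hb
      set η : Fin k2 → ℝ := fun t => A 0 (b t) with hη
      have hηpm : ∀ t, η t = 1 ∨ η t = -1 := by
        intro t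
        have := hab5 (e2 t)
        rcases tu_entry hTU 0 (b t) with f | f | f
        · exact Or.inr f
        · exact absurd f this
        · exact Or.inl f
      have hclab : ∀ t, proj (b t) = proj (a t) ∨ proj (b t) = -proj (a t) := by
        intro t
        have hF1 : F (b t) = F (a t) := by rw [hab1 (e2 t), hab2 (e2 t)]
        exact hFcl (b t) (a t) hF1
      set ζ : Fin k2 → ℝ := fun t => if proj (b t) = proj (a t) then 1 else -1 with hζ
      have hζpm : ∀ t, ζ t = 1 ∨ ζ t = -1 := by
        intro t
        show (if proj (b t) = proj (a t) then (1 : ℝ) else -1) = 1 ∨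
          (if proj (b t) = proj (a t) then (1 : ℝ) else -1) = -1
        split <;> simp
      have habrel : ∀ t i, A (Fin.succ i) (b t) = ζ t * A (Fin.succ i) (a t) := by
        intro t i
        by_cases h : proj (b t) = proj (a t)
        · have hzt : ζ t = 1 := by
            show (if proj (b t) = proj (a t) then (1 : ℝ) else -1) = 1
            rw [if_pos h]
          rw [hzt, one_mul]
          exact congrFun h i
        · have hzt : ζ t = -1 := by
            show (if proj (b t) = proj (a t) then (1 : ℝ) else -1) = -1
            rw [if_neg h]
          rw [hzt]
          rcases hclab t with h1 | h1
          · exact absurd h1 h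
          · have := congrFun h1 i
            rw [neg_one_mul]
            simpa using this
      have hpairD : ∀ t t', t ≠ t' →
          ¬((fun i => A (Fin.succ i) (a t)) = (fun i => A (Fin.succ i) (a t')) ∨
            (fun i => A (Fin.succ i) (a t)) = -(fun i => A (Fin.succ i) (a t'))) := by
        intro t t' htt hcon
        have hFa : F (a t) = F (a t') := by
          have h1 : F (a t) = F (a t') ↔ True := by
            constructor
            · intro _; trivial
            · intro _
              rcases hcon with h | h
              · exact hNeq _ _ (Or.inl h)
              · exact hNeq _ _ (Or.inr h)
          exact h1.mpr trivial
        rw [hab1 (e2 t), hab1 (e2 t')] at hFa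
        exact htt (e2.injective (Subtype.ext hFa))
      have hanzD : ∀ t, (fun i => A (Fin.succ i) (a t)) ≠ 0 := by
        intro t h0
        apply hvne (e2 t)
        rw [← hab1 (e2 t), hF]
        show N (proj (a t)) = 0
        have : proj (a t) = 0 := h0
        rw [this]
        rcases hN1 0 with e | e
        · exact e
        · rw [neg_zero] at e; exact e
      have hindep := indep_doubled hTU a b η ζ hηpm hζpm
        (fun t => hab4 (e2 t)) (fun t => rfl) habrel hpairD hanzD
      have hcardle := hindep.fintype_card_le_finrank
      rw [Fintype.card_fin] at hcardle
      have hfr : Module.finrank ℝ (Fin m → ℝ) = m := by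
        rw [Module.finrank_pi]
        exact Fintype.card_fin m
      rw [hfr] at hcardle
      exact hcardle
    -- assemble the count
    have hsplit1 : ∑ v ∈ T, (fib v).card
        = ∑ v ∈ T.filter (fun v => v = 0), (fib v).card + ∑ v ∈ Tp, (fib v).card := by
      rw [hTp]
      exact (Finset.sum_filter_add_sum_filter_not T (fun v => v = 0) _).symm
    have hbound0 : ∑ v ∈ T.filter (fun v => v = 0), (fib v).card ≤ 1 := by
      have hsub : T.filter (fun v => v = 0) ⊆ {0} := by
        intro v hv
        rw [Finset.mem_singleton]
        exact (Finset.mem_filter.mp hv).2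
      calc ∑ v ∈ T.filter (fun v => v = 0), (fib v).card
          ≤ ∑ v ∈ ({0} : Finset (Fin m → ℝ)), (fib v).card :=
            Finset.sum_le_sum_of_subset hsub
        _ = (fib 0).card := Finset.sum_singleton _ _
        _ ≤ 1 := hfib0
    have hsplit2 : ∑ v ∈ Tp, (fib v).card
        = ∑ v ∈ T2, (fib v).card + ∑ v ∈ Tp.filter (fun v => ¬2 ≤ (fib v).card), (fib v).card := by
      rw [hT2]
      exact (Finset.sum_filter_add_sum_filter_not Tp (fun v => 2 ≤ (fib v).card) _).symm
    have hbound2 : ∑ v ∈ T2, (fib v).card ≤ 2 * T2.card := by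
      calc ∑ v ∈ T2, (fib v).card ≤ ∑ _v ∈ T2, 2 := by
            refine Finset.sum_le_sum ?_
            intro v hv
            have hvTp := Finset.mem_of_mem_filter v hv
            exact hfib2 v (Finset.mem_filter.mp hvTp).2
        _ = 2 * T2.card := by rw [Finset.sum_const, smul_eq_mul, mul_comm]
    have hbound1 : ∑ v ∈ Tp.filter (fun v => ¬2 ≤ (fib v).card), (fib v).card
        ≤ (Tp.filter (fun v => ¬2 ≤ (fib v).card)).card := by
      calc ∑ v ∈ Tp.filter (fun v => ¬2 ≤ (fib v).card), (fib v).card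
          ≤ ∑ _v ∈ Tp.filter (fun v => ¬2 ≤ (fib v).card), 1 := by
            refine Finset.sum_le_sum ?_
            intro v hv
            have := (Finset.mem_filter.mp hv).2
            omega
        _ = (Tp.filter (fun v => ¬2 ≤ (fib v).card)).card := by
            rw [Finset.sum_const, smul_eq_mul, mul_one]
    have hcards : T2.card + (Tp.filter (fun v => ¬2 ≤ (fib v).card)).card = Tp.card := by
      rw [hT2]
      exact Finset.card_filter_add_card_filter_not _
    have hYX : (m + 1) * (m + 2) / 2 = m * (m + 1) / 2 + (m + 1) := by
      have hexp : (m + 1) * (m + 2) = m * (m + 1) + (m + 1) * 2 := by ring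
      rw [hexp, Nat.add_mul_div_right _ _ (by norm_num : (0 : ℕ) < 2)]
    have hgoal : (m + 1) * (m + 1 + 1) / 2 = m * (m + 1) / 2 + (m + 1) := by
      rw [← hYX]
    omega

/-- Korkine–Zolotarev/Heller bound: a totally unimodular `d × r` matrix whose
columns are nonzero, pairwise distinct, and pairwise non-opposite has
`r ≤ d(d+1)/2` columns. -/
theorem tu_column_bound (d r : ℕ) (A : Matrix (Fin d) (Fin r) ℝ)
    (hTU : TotallyUnimodular A)
    (hnz : ∀ j, (fun i => A i j) ≠ 0)
    (hdist : ∀ j j', j ≠ j' → (fun i => A i j) ≠ (fun i => A i j'))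
    (hopp : ∀ j j', j ≠ j' → (fun i => A i j) ≠ -(fun i => A i j')) :
    r ≤ d * (d + 1) / 2 := heller_aux d r A hTU hnz hdist hopp
end

section
/- Let H ⊆ ℝ^k be an affine subspace with direction space L and base point h, and suppose all points of X := {0,1}^k ∩ H have common norm α > 0. Define the lattice Λ := {(z′,z″) ∈ ℤ^k × αℤ : z′ + (z″/α)h ∈ L, ⟨𝟏, z′⟩ + α z″ = 0} and the point p := (0, −α) ∈ ℝ^{k+1}. Then the set of lattice points of Λ closest to p is exactly {0} ∪ {(x, −α) : x ∈ X}. -/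
open scoped RealInnerProductSpace

private lemma kannan_norm_sq {n : ℕ} (v : EuclideanSpace ℝ (Fin n)) :
    ‖v‖ ^ 2 = ∑ i, (v i) ^ 2 := by
  rw [EuclideanSpace.norm_eq, Real.sq_sqrt (by positivity)]
  simp [sq_abs]

private lemma kannan_int_le_sq (m : ℤ) : m ≤ m ^ 2 := by
  rcases le_or_gt m 0 with hm | hm
  · exact hm.trans (sq_nonneg m)
  · nlinarith

private lemma kannan_int_sq_add (m : ℤ) : 0 ≤ m ^ 2 + m := by
  rcases le_or_gt 0 m with hm | hm
  · positivity
  · nlinarith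

/-- The vector `(x, -α)` in `ℝ^(k+1)`. -/
private def kvec (k : ℕ) (α : ℝ) (x : EuclideanSpace ℝ (Fin k)) :
    EuclideanSpace ℝ (Fin (k + 1)) :=
  WithLp.toLp 2 (fun j => if hj : j = Fin.last k then -α else x (j.castPred hj))

private lemma kvec_castSucc (k : ℕ) (α : ℝ) (x : EuclideanSpace ℝ (Fin k)) (i : Fin k) :
    kvec k α x (Fin.castSucc i) = x i := by
  rw [kvec, WithLp.ofLp_toLp, dif_neg (Fin.castSucc_lt_last i).ne, Fin.castPred_castSucc]

private lemma kvec_last (k : ℕ) (α : ℝ) (x : EuclideanSpace ℝ (Fin k)) :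
    kvec k α x (Fin.last k) = -α := by
  rw [kvec, WithLp.ofLp_toLp, dif_pos rfl]

set_option maxHeartbeats 1000000 in
/-- Kannan-style lattice construction: let `H = h + L ⊆ ℝ^k` be an affine subspace
such that all points of `X = {0,1}^k ∩ H` have common norm `α > 0`.  For the lattice
`Λ = {(z′,z″) ∈ ℤ^k × αℤ : z′ + (z″/α)h ∈ L, ⟨𝟏,z′⟩ + αz″ = 0} ⊆ ℝ^{k+1}` and the
point `p = (0,−α)`, the lattice points of `Λ` closest to `p` are exactly
`{0} ∪ {(x,−α) : x ∈ X}`. -/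
theorem closest_points_of_kannan_lattice (k : ℕ)
    (L : Submodule ℝ (EuclideanSpace ℝ (Fin k))) (h : EuclideanSpace ℝ (Fin k))
    (α : ℝ) (hα : 0 < α)
    (X : Set (EuclideanSpace ℝ (Fin k)))
    (hX : X = {x | (∀ i, x i = 0 ∨ x i = 1) ∧ x - h ∈ L})
    (hnorm : ∀ x ∈ X, ‖x‖ = α)
    (Λ : Set (EuclideanSpace ℝ (Fin (k + 1))))
    (hΛ : Λ = {z | (∀ i : Fin k, ∃ m : ℤ, z (Fin.castSucc i) = (m : ℝ)) ∧
      (∃ m : ℤ, z (Fin.last k) = α * (m : ℝ)) ∧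
      (WithLp.toLp 2 (fun i => z (Fin.castSucc i) + (z (Fin.last k) / α) * h i) :
          EuclideanSpace ℝ (Fin k)) ∈ L ∧
      (∑ i : Fin k, z (Fin.castSucc i)) + α * z (Fin.last k) = 0})
    (p : EuclideanSpace ℝ (Fin (k + 1)))
    (hp : p = fun j => if j = Fin.last k then -α else 0) :
    {z ∈ Λ | ∀ w ∈ Λ, ‖p - z‖ ≤ ‖p - w‖} =
      {0} ∪ {z : EuclideanSpace ℝ (Fin (k + 1)) | ∃ x ∈ X,
        z = fun j => if hj : j = Fin.last k then -α else x (j.castPred hj)} := by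
  have hα' : α ≠ 0 := ne_of_gt hα
  have hcs : ∀ i : Fin k, (Fin.castSucc i : Fin (k + 1)) ≠ Fin.last k :=
    fun i => (Fin.castSucc_lt_last i).ne
  have hRHS : {z : EuclideanSpace ℝ (Fin (k + 1)) | ∃ x ∈ X,
      z = fun j => if hj : j = Fin.last k then -α else x (j.castPred hj)}
      = {z : EuclideanSpace ℝ (Fin (k + 1)) | ∃ x ∈ X, z = kvec k α x} :=
    Set.ext fun z => exists_congr fun x => and_congr_right fun _ =>
      ⟨fun hz => by rw [kvec, ← hz], fun hz => by rw [hz]; rfl⟩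
  rw [hRHS]
  have hp1 : ∀ i : Fin k, p (Fin.castSucc i) = 0 := by
    intro i; rw [hp]; simp [hcs i]
  have hp2 : p (Fin.last k) = -α := by rw [hp]; simp
  -- squared distance formula
  have hdist : ∀ w : EuclideanSpace ℝ (Fin (k + 1)),
      ‖p - w‖ ^ 2 = (∑ i : Fin k, (w (Fin.castSucc i)) ^ 2)
        + (α + w (Fin.last k)) ^ 2 := by
    intro w
    rw [kannan_norm_sq, Fin.sum_univ_castSucc]
    congr 1
    · refine Finset.sum_congr rfl fun i _ => ?_
      have hs : (p - w) (Fin.castSucc i) = p (Fin.castSucc i) - w (Fin.castSucc i) := rfl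
      rw [hs, hp1 i]; ring
    · have hs : (p - w) (Fin.last k) = p (Fin.last k) - w (Fin.last k) := rfl
      rw [hs, hp2]; ring
  -- for x ∈ X, both the coordinate sum and sum of squares equal α ^ 2
  have hXsum : ∀ x ∈ X, (∑ i : Fin k, x i) = α ^ 2 ∧ (∑ i : Fin k, (x i) ^ 2) = α ^ 2 := by
    intro x hx
    have h01 : ∀ i, x i = 0 ∨ x i = 1 := (hX ▸ hx).1
    have hsq : (∑ i : Fin k, (x i) ^ 2) = α ^ 2 := by
      rw [← kannan_norm_sq, hnorm x hx]
    have heq : (∑ i : Fin k, x i) = ∑ i : Fin k, (x i) ^ 2 := by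
      refine Finset.sum_congr rfl fun i _ => ?_
      rcases h01 i with hv | hv <;> rw [hv] <;> norm_num
    exact ⟨heq.trans hsq, hsq⟩
  -- 0 belongs to Λ
  have h0Λ : (0 : EuclideanSpace ℝ (Fin (k + 1))) ∈ Λ := by
    rw [hΛ]
    refine ⟨fun i => ⟨0, by simp⟩, ⟨0, by simp⟩, ?_, by simp⟩
    have hz0 : (WithLp.toLp 2 (fun i => (0 : EuclideanSpace ℝ (Fin (k+1))) (Fin.castSucc i)
        + ((0 : EuclideanSpace ℝ (Fin (k+1))) (Fin.last k) / α) * h i) :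
        EuclideanSpace ℝ (Fin k)) = 0 := by
      ext i; simp
    rw [hz0]; exact L.zero_mem
  -- the point (x, -α) belongs to Λ for x ∈ X
  have hxΛ : ∀ x ∈ X, kvec k α x ∈ Λ := by
    intro x hx
    rw [hΛ]
    refine ⟨?_, ⟨-1, by rw [kvec_last]; push_cast; ring⟩, ?_, ?_⟩
    · intro i
      rcases (hX ▸ hx).1 i with hv | hv
      · exact ⟨0, by rw [kvec_castSucc, hv]; simp⟩
      · exact ⟨1, by rw [kvec_castSucc, hv]; simp⟩
    · have hfn : (WithLp.toLp 2 (fun i => kvec k α x (Fin.castSucc i)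
          + (kvec k α x (Fin.last k) / α) * h i) : EuclideanSpace ℝ (Fin k)) = x - h := by
        ext i
        change kvec k α x (Fin.castSucc i) + (kvec k α x (Fin.last k) / α) * h i = (x - h) i
        have hs : (x - h) i = x i - h i := rfl
        rw [hs, kvec_castSucc, kvec_last, neg_div, div_self hα']; ring
      rw [hfn]; exact (hX ▸ hx).2
    · have hsum : (∑ i : Fin k, kvec k α x (Fin.castSucc i)) = α ^ 2 := by
        rw [Finset.sum_congr rfl fun i _ => kvec_castSucc k α x i]
        exact (hXsum x hx).1
      rw [hsum, kvec_last]; ring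
  -- distances of the claimed minimizers
  have hd0 : ‖p - 0‖ ^ 2 = α ^ 2 := by rw [hdist]; simp
  have hdx : ∀ x ∈ X, ‖p - kvec k α x‖ ^ 2 = α ^ 2 := by
    intro x hx
    rw [hdist, kvec_last,
      Finset.sum_congr rfl fun i _ => by rw [kvec_castSucc k α x i],
      (hXsum x hx).2]
    ring
  -- lower bound and equality characterization
  have hkey : ∀ w ∈ Λ, α ^ 2 ≤ ‖p - w‖ ^ 2 ∧ (‖p - w‖ ^ 2 = α ^ 2 →
      w = 0 ∨ ∃ x ∈ X, w = kvec k α x) := by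
    intro w hw
    rw [hΛ] at hw
    obtain ⟨hint, ⟨m, hm⟩, hL, hsum⟩ := hw
    choose f hf using hint
    have hDS : ‖p - w‖ ^ 2 = (∑ i : Fin k, ((f i : ℝ)) ^ 2)
        + α ^ 2 * ((m : ℝ) + 1) ^ 2 := by
      rw [hdist, Finset.sum_congr rfl fun i _ => by rw [hf i], hm]; ring
    have hsum' : (∑ i : Fin k, ((f i : ℝ))) = -(α ^ 2 * m) := by
      have hs2 : (∑ i : Fin k, ((f i : ℝ))) = ∑ i : Fin k, w (Fin.castSucc i) :=
        Finset.sum_congr rfl fun i _ => (hf i).symm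
      rw [hs2]; rw [hm] at hsum; nlinarith [hsum]
    have hle : ∀ i : Fin k, (f i : ℝ) ≤ ((f i : ℝ)) ^ 2 := by
      intro i; exact_mod_cast kannan_int_le_sq (f i)
    have hlow : α ^ 2 * ((m : ℝ) ^ 2 + (m : ℝ) + 1) ≤ ‖p - w‖ ^ 2 := by
      have h1 : (∑ i : Fin k, ((f i : ℝ))) ≤ ∑ i : Fin k, ((f i : ℝ)) ^ 2 :=
        Finset.sum_le_sum fun i _ => hle i
      rw [hDS]; rw [hsum'] at h1; nlinarith
    have hmm : (0 : ℝ) ≤ (m : ℝ) ^ 2 + (m : ℝ) := by exact_mod_cast kannan_int_sq_add m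
    constructor
    · nlinarith
    · intro heq
      have hm0 : (m : ℝ) ^ 2 + (m : ℝ) = 0 := by
        by_contra hc
        have hpos : 0 < (m : ℝ) ^ 2 + (m : ℝ) := lt_of_le_of_ne hmm (Ne.symm hc)
        have := mul_pos (pow_pos hα 2) hpos
        nlinarith
      have hm0' : m ^ 2 + m = 0 := by exact_mod_cast hm0
      have hmul : m * (m + 1) = 0 := by nlinarith [hm0']
      rcases mul_eq_zero.mp hmul with hm1 | hm1
      · -- m = 0, so w = 0
        left
        subst hm1
        have hsz : (∑ i : Fin k, ((f i : ℝ)) ^ 2) = 0 := by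
          rw [hDS] at heq; push_cast at heq; nlinarith
        have hfz : ∀ i : Fin k, (f i : ℝ) = 0 := by
          intro i
          have h2 := (Finset.sum_eq_zero_iff_of_nonneg
            (fun i _ => sq_nonneg ((f i : ℝ)))).mp hsz i (Finset.mem_univ i)
          exact pow_eq_zero_iff two_ne_zero |>.mp h2
        ext j
        rcases eq_or_ne j (Fin.last k) with hj | hj
        · subst hj
          have hwz : w (Fin.last k) = 0 := by rw [hm]; push_cast; ring
          simpa using hwz
        · obtain ⟨i, rfl⟩ := Fin.exists_castSucc_eq.mpr hj
          have hwz : w (Fin.castSucc i) = 0 := by rw [hf i, hfz i]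
          simpa using hwz
      · -- m = -1, so w = (x, -α) with x ∈ X
        right
        have hm1' : m = -1 := by linarith
        subst hm1'
        have hwl : w (Fin.last k) = -α := by rw [hm]; push_cast; ring
        have hsum2 : (∑ i : Fin k, ((f i : ℝ))) = α ^ 2 := by
          rw [hsum']; push_cast; ring
        have hsq2 : (∑ i : Fin k, ((f i : ℝ)) ^ 2) = α ^ 2 := by
          rw [hDS] at heq; push_cast at heq; nlinarith
        have hdiff : (∑ i : Fin k, (((f i : ℝ)) ^ 2 - (f i : ℝ))) = 0 := by
          rw [Finset.sum_sub_distrib, hsum2, hsq2]; ring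
        have h01 : ∀ i : Fin k, (f i : ℝ) = 0 ∨ (f i : ℝ) = 1 := by
          intro i
          have h2 := (Finset.sum_eq_zero_iff_of_nonneg
            (fun i _ => by linarith [hle i])).mp hdiff i (Finset.mem_univ i)
          have h3 : (f i : ℝ) * ((f i : ℝ) - 1) = 0 := by nlinarith [h2]
          rcases mul_eq_zero.mp h3 with hv | hv
          · exact Or.inl hv
          · exact Or.inr (by linarith)
        obtain ⟨x, hxdef⟩ : ∃ x : EuclideanSpace ℝ (Fin k),
            ∀ i, x i = w (Fin.castSucc i) := ⟨WithLp.toLp 2 (fun i => w (Fin.castSucc i)), fun _ => rfl⟩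
        have hx01 : ∀ i, x i = 0 ∨ x i = 1 := by
          intro i
          rw [hxdef i, hf i]; exact h01 i
        have hxL : x - h ∈ L := by
          have hfn : (WithLp.toLp 2 (fun i => w (Fin.castSucc i) + (w (Fin.last k) / α) * h i) :
              EuclideanSpace ℝ (Fin k)) = x - h := by
            ext i
            change w (Fin.castSucc i) + (w (Fin.last k) / α) * h i = (x - h) i
            have hs : (x - h) i = x i - h i := rfl
            rw [hs, hwl, neg_div, div_self hα', hxdef i]
            ring
          rw [hfn] at hL; exact hL
        have hxX : x ∈ X := by rw [hX]; exact ⟨hx01, hxL⟩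
        refine ⟨x, hxX, ?_⟩
        ext j
        rcases eq_or_ne j (Fin.last k) with hj | hj
        · subst hj; rw [kvec_last]; exact hwl
        · obtain ⟨i, rfl⟩ := Fin.exists_castSucc_eq.mpr hj
          rw [kvec_castSucc, hxdef i]
  -- sq comparison helper
  have hsqle : ∀ a b : ℝ, 0 ≤ a → 0 ≤ b → a ^ 2 ≤ b ^ 2 → a ≤ b := by
    intro a b ha hb hab; nlinarith
  ext z
  simp only [Set.mem_setOf_eq, Set.mem_sep_iff, Set.mem_union, Set.mem_singleton_iff]
  constructor
  · rintro ⟨hzΛ, hzmin⟩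
    have hle : ‖p - z‖ ≤ ‖p - 0‖ := hzmin 0 h0Λ
    have hle2 : ‖p - z‖ ^ 2 ≤ α ^ 2 := by
      rw [← hd0]
      exact pow_le_pow_left₀ (norm_nonneg _) hle 2
    have hge := (hkey z hzΛ).1
    exact (hkey z hzΛ).2 (le_antisymm hle2 hge)
  · intro hz
    have hzΛ : z ∈ Λ := by
      rcases hz with rfl | ⟨x, hx, rfl⟩
      · exact h0Λ
      · exact hxΛ x hx
    have hzd : ‖p - z‖ ^ 2 = α ^ 2 := by
      rcases hz with rfl | ⟨x, hx, rfl⟩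
      · exact hd0
      · exact hdx x hx
    refine ⟨hzΛ, fun w hw => ?_⟩
    refine hsqle _ _ (norm_nonneg _) (norm_nonneg _) ?_
    rw [hzd]
    exact (hkey w hw).1
end
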